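/- arXiv:1405.4981 — 7 statements merged into one kernel-verified Lean document; each statement's English description precedes it below -/
import Mathlib

section
/- For every stochastic encoder Q with hint sets ℳ₁, ℳ₂, Bob's guessing ambiguity is lower-bounded by A_B^g(Q) ≥ max( (1 + ln|𝒳|)^{−ρ} · 2^{ρ(H_ᾱ(X|Y) − log(|ℳ₁|·|ℳ₂|))}, 1 ). -/
open Real Finset Filter
open scoped Classical

noncomputable section

/-- `G` is a guessing function for `𝒳` given side-information in `W`: for each
side-information value `w`, `x ↦ G x w` is a bijection from `𝒳` onto `{1, …, |𝒳|}`. -/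
def IsGuessing {𝒳 W : Type*} [Fintype 𝒳] (G : 𝒳 → W → ℕ) : Prop :=
  ∀ w : W, (Function.Injective fun x => G x w) ∧
    ∀ x, G x w ∈ Finset.Icc 1 (Fintype.card 𝒳)

/-- `P` is a probability mass function on `𝒳 × 𝒴` (written in curried form). -/
def IsPMF {𝒳 𝒴 : Type*} [Fintype 𝒳] [Fintype 𝒴] (P : 𝒳 → 𝒴 → ℝ) : Prop :=
  (∀ x y, 0 ≤ P x y) ∧ ∑ x, ∑ y, P x y = 1

/-- `Q` is a conditional PMF on `M` given `(x, y)`. -/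
def IsCondPMF {𝒳 𝒴 M : Type*} [Fintype M] (Q : 𝒳 → 𝒴 → M → ℝ) : Prop :=
  ∀ x y, (∀ m, 0 ≤ Q x y m) ∧ ∑ m, Q x y m = 1

/-- Conditional Rényi entropy of order `α` (base-2 logarithms). -/
def condRenyi {𝒳 𝒴 : Type*} [Fintype 𝒳] [Fintype 𝒴] (α : ℝ) (P : 𝒳 → 𝒴 → ℝ) : ℝ :=
  (α / (1 - α)) * Real.logb 2 (∑ y, (∑ x, P x y ^ α) ^ (1 / α))

/-- Bob's guessing ambiguity: the least `ρ`-th guessing moment over guessing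
functions for `X` given `(Y, M₁, M₂)`. -/
def bobGuessAmb {𝒳 𝒴 M₁ M₂ : Type*} [Fintype 𝒳] [Fintype 𝒴] [Fintype M₁] [Fintype M₂]
    (ρ : ℝ) (P : 𝒳 → 𝒴 → ℝ) (Q : 𝒳 → 𝒴 → M₁ × M₂ → ℝ) : ℝ :=
  sInf { e | ∃ G : 𝒳 → 𝒴 × M₁ × M₂ → ℕ, IsGuessing G ∧
    e = ∑ x, ∑ y, ∑ m : M₁ × M₂, P x y * Q x y m * (G x (y, m) : ℝ) ^ ρ }

/-- Eve's ambiguity: the least `ρ`-th moment of the minimum of two guessing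
functions, one for `X` given `(Y, M₁)` and one for `X` given `(Y, M₂)`. -/
def eveAmb {𝒳 𝒴 M₁ M₂ : Type*} [Fintype 𝒳] [Fintype 𝒴] [Fintype M₁] [Fintype M₂]
    (ρ : ℝ) (P : 𝒳 → 𝒴 → ℝ) (Q : 𝒳 → 𝒴 → M₁ × M₂ → ℝ) : ℝ :=
  sInf { e | ∃ G₁ : 𝒳 → 𝒴 × M₁ → ℕ, ∃ G₂ : 𝒳 → 𝒴 × M₂ → ℕ,
    IsGuessing G₁ ∧ IsGuessing G₂ ∧
    e = ∑ x, ∑ y, ∑ m : M₁ × M₂, P x y * Q x y m *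
      ((min (G₁ x (y, m.1)) (G₂ x (y, m.2)) : ℕ) : ℝ) ^ ρ }

/-- Bob's list ambiguity: the `ρ`-th moment of the size of the list of all `x`
with positive posterior probability given `(Y, M₁, M₂)`. -/
def bobListAmb {𝒳 𝒴 M₁ M₂ : Type*} [Fintype 𝒳] [Fintype 𝒴] [Fintype M₁] [Fintype M₂]
    (ρ : ℝ) (P : 𝒳 → 𝒴 → ℝ) (Q : 𝒳 → 𝒴 → M₁ × M₂ → ℝ) : ℝ :=
  ∑ x, ∑ y, ∑ m : M₁ × M₂, P x y * Q x y m *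
    ((Finset.univ.filter fun x' => 0 < P x' y * Q x' y m).card : ℝ) ^ ρ
namespace GuessAux

open scoped NNReal

/-- Two-term subadditivity of `rpow` for exponents in `[0,1]`. -/
lemma add_rpow_le {p : ℝ} (hp : 0 ≤ p) (hp1 : p ≤ 1) {a b : ℝ} (ha : 0 ≤ a) (hb : 0 ≤ b) :
    (a + b) ^ p ≤ a ^ p + b ^ p := by
  lift a to ℝ≥0 using ha
  lift b to ℝ≥0 using hb
  have := NNReal.rpow_add_le_add_rpow a b hp hp1
  exact_mod_cast this

/-- Finset subadditivity of `rpow` for exponents in `(0,1]`. -/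
lemma rpow_sum_le_sum_rpow {ι : Type*} (s : Finset ι) (f : ι → ℝ) (hf : ∀ i, 0 ≤ f i)
    {p : ℝ} (hp : 0 < p) (hp1 : p ≤ 1) :
    (∑ i ∈ s, f i) ^ p ≤ ∑ i ∈ s, f i ^ p := by
  classical
  induction s using Finset.cons_induction with
  | empty => simp [Real.zero_rpow hp.ne']
  | cons a s ha ih =>
    rw [Finset.sum_cons, Finset.sum_cons]
    refine (add_rpow_le hp.le hp1 (hf a) (Finset.sum_nonneg fun i _ => hf i)).trans ?_
    exact add_le_add_right ih _

/-- The sum of reciprocals of an injective guessing function is at most `1 + log |𝒳|`. -/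
lemma sum_inv_le_one_add_log {𝒳 : Type*} [Fintype 𝒳] (g : 𝒳 → ℕ)
    (hinj : Function.Injective g) (hmem : ∀ x, g x ∈ Finset.Icc 1 (Fintype.card 𝒳)) :
    ∑ x : 𝒳, ((g x : ℝ))⁻¹ ≤ 1 + Real.log (Fintype.card 𝒳) := by
  have h1 : ∑ x : 𝒳, ((g x : ℝ))⁻¹ = ∑ k ∈ Finset.univ.image g, ((k : ℝ))⁻¹ :=
    (Finset.sum_image (f := fun k : ℕ => ((k : ℝ))⁻¹) (fun a _ b _ h => hinj h)).symm
  rw [h1]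
  have h2 : Finset.univ.image g ⊆ Finset.Icc 1 (Fintype.card 𝒳) := by
    intro k hk
    obtain ⟨x, _, rfl⟩ := Finset.mem_image.mp hk
    exact hmem x
  refine (Finset.sum_le_sum_of_subset_of_nonneg h2 (fun k _ _ => by positivity)).trans ?_
  have h4 : ∑ k ∈ Finset.Icc 1 (Fintype.card 𝒳), ((k : ℝ))⁻¹
      = ((harmonic (Fintype.card 𝒳) : ℚ) : ℝ) := by
    rw [harmonic_eq_sum_Icc]
    push_cast
    rfl
  rw [h4]
  exact harmonic_le_one_add_log _

/-- Arikan's converse bound for a single side-information value. -/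
lemma arikan_bound {𝒳 : Type*} [Fintype 𝒳] [Nonempty 𝒳] {ρ : ℝ} (hρ : 0 < ρ)
    (c : 𝒳 → ℝ) (hc : ∀ x, 0 ≤ c x) (g : 𝒳 → ℕ)
    (hinj : Function.Injective g) (hmem : ∀ x, g x ∈ Finset.Icc 1 (Fintype.card 𝒳)) :
    (∑ x, c x ^ (1 / (1 + ρ))) ^ (1 + ρ) ≤
      (1 + Real.log (Fintype.card 𝒳)) ^ ρ * ∑ x, c x * (g x : ℝ) ^ ρ := by
  classical
  have h1ρ : (0 : ℝ) < 1 + ρ := by linarith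
  have hpq : Real.HolderConjugate (1 + ρ) ((1 + ρ) / ρ) := by
    constructor
    · rw [inv_div, inv_one, inv_eq_one_div, ← add_div, div_self h1ρ.ne']
    · linarith
    · positivity
  have hg1 : ∀ x, (1 : ℝ) ≤ (g x : ℝ) := fun x => by
    have := (Finset.mem_Icc.mp (hmem x)).1
    exact_mod_cast this
  have hgpos : ∀ x, (0 : ℝ) < (g x : ℝ) := fun x => lt_of_lt_of_le one_pos (hg1 x)
  have hL1 : (1 : ℝ) ≤ 1 + Real.log (Fintype.card 𝒳) := by
    have h : (1 : ℝ) ≤ (Fintype.card 𝒳 : ℝ) := by exact_mod_cast Fintype.card_pos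
    have := Real.log_nonneg h
    linarith
  have hL0 : (0 : ℝ) ≤ 1 + Real.log (Fintype.card 𝒳) := le_trans zero_le_one hL1
  have hA0 : 0 ≤ ∑ x, c x * (g x : ℝ) ^ ρ := Finset.sum_nonneg fun x _ =>
    mul_nonneg (hc x) (Real.rpow_nonneg (hgpos x).le ρ)
  have hB0 : 0 ≤ ∑ x : 𝒳, ((g x : ℝ))⁻¹ := Finset.sum_nonneg fun x _ => by positivity
  have hBL : ∑ x : 𝒳, ((g x : ℝ))⁻¹ ≤ 1 + Real.log (Fintype.card 𝒳) :=
    sum_inv_le_one_add_log g hinj hmem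
  have hsum : ∑ x, c x ^ (1 / (1 + ρ)) =
      ∑ x, (c x * (g x : ℝ) ^ ρ) ^ (1 / (1 + ρ)) * ((g x : ℝ)) ^ (-(ρ * (1 / (1 + ρ)))) := by
    refine Finset.sum_congr rfl fun x _ => ?_
    rw [Real.mul_rpow (hc x) (Real.rpow_nonneg (hgpos x).le ρ),
        ← Real.rpow_mul (hgpos x).le, mul_assoc,
        ← Real.rpow_add (hgpos x), add_neg_cancel, Real.rpow_zero, mul_one]
  have holder := Real.inner_le_Lp_mul_Lq_of_nonneg (s := (Finset.univ : Finset 𝒳))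
      (f := fun x => (c x * (g x : ℝ) ^ ρ) ^ (1 / (1 + ρ)))
      (g := fun x => ((g x : ℝ)) ^ (-(ρ * (1 / (1 + ρ))))) hpq
      (fun x _ => Real.rpow_nonneg (mul_nonneg (hc x) (Real.rpow_nonneg (hgpos x).le ρ)) _)
      (fun x _ => Real.rpow_nonneg (hgpos x).le _)
  have e1 : ∀ x : 𝒳, ((c x * (g x : ℝ) ^ ρ) ^ (1 / (1 + ρ))) ^ (1 + ρ)
      = c x * (g x : ℝ) ^ ρ := by
    intro x
    rw [← Real.rpow_mul (mul_nonneg (hc x) (Real.rpow_nonneg (hgpos x).le ρ)),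
        one_div_mul_cancel h1ρ.ne', Real.rpow_one]
  have e2 : ∀ x : 𝒳, (((g x : ℝ)) ^ (-(ρ * (1 / (1 + ρ))))) ^ ((1 + ρ) / ρ)
      = ((g x : ℝ))⁻¹ := by
    intro x
    rw [← Real.rpow_mul (hgpos x).le]
    have hexp : -(ρ * (1 / (1 + ρ))) * ((1 + ρ) / ρ) = -1 := by
      field_simp
    rw [hexp, Real.rpow_neg_one]
  simp only [e1, e2] at holder
  rw [← hsum] at holder
  have hmono := Real.rpow_le_rpow
    (Finset.sum_nonneg fun x _ => Real.rpow_nonneg (hc x) _) holder h1ρ.le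
  have hq : 1 / ((1 + ρ) / ρ) * (1 + ρ) = ρ := by
    rw [one_div_div]
    exact div_mul_cancel₀ ρ h1ρ.ne'
  have hRHS : ((∑ x, c x * (g x : ℝ) ^ ρ) ^ (1 / (1 + ρ))
        * (∑ x : 𝒳, ((g x : ℝ))⁻¹) ^ (1 / ((1 + ρ) / ρ))) ^ (1 + ρ)
      = (∑ x, c x * (g x : ℝ) ^ ρ) * (∑ x : 𝒳, ((g x : ℝ))⁻¹) ^ ρ := by
    rw [Real.mul_rpow (Real.rpow_nonneg hA0 _) (Real.rpow_nonneg hB0 _),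
        ← Real.rpow_mul hA0, ← Real.rpow_mul hB0,
        one_div_mul_cancel h1ρ.ne', Real.rpow_one, hq]
  rw [hRHS] at hmono
  refine hmono.trans ?_
  rw [mul_comm ((1 + Real.log (Fintype.card 𝒳)) ^ ρ)]
  exact mul_le_mul_of_nonneg_left (Real.rpow_le_rpow hB0 hBL hρ.le) hA0

/-- The `ρ`-th guessing moment is at least `1`. -/
lemma one_le_moment {𝒳 𝒴 M₁ M₂ : Type*} [Fintype 𝒳] [Fintype 𝒴] [Fintype M₁] [Fintype M₂]
    {ρ : ℝ} (hρ : 0 < ρ) {P : 𝒳 → 𝒴 → ℝ} (hP : IsPMF P)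
    {Q : 𝒳 → 𝒴 → M₁ × M₂ → ℝ} (hQ : IsCondPMF Q)
    {G : 𝒳 → 𝒴 × M₁ × M₂ → ℕ} (hG : IsGuessing G) :
    (1 : ℝ) ≤ ∑ x, ∑ y, ∑ m : M₁ × M₂, P x y * Q x y m * (G x (y, m) : ℝ) ^ ρ := by
  obtain ⟨hPnn, hPsum⟩ := hP
  have hPQ : ∀ x y (m : M₁ × M₂), 0 ≤ P x y * Q x y m :=
    fun x y m => mul_nonneg (hPnn x y) ((hQ x y).1 m)
  have hterm : ∀ x y (m : M₁ × M₂),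
      P x y * Q x y m ≤ P x y * Q x y m * (G x (y, m) : ℝ) ^ ρ := by
    intro x y m
    nth_rewrite 1 [← mul_one (P x y * Q x y m)]
    refine mul_le_mul_of_nonneg_left ?_ (hPQ x y m)
    refine Real.one_le_rpow ?_ hρ.le
    have := (Finset.mem_Icc.mp ((hG (y, m)).2 x)).1
    exact_mod_cast this
  calc (1 : ℝ) = ∑ x, ∑ y, ∑ m : M₁ × M₂, P x y * Q x y m := by
        rw [← hPsum]
        refine Finset.sum_congr rfl fun x _ => Finset.sum_congr rfl fun y _ => ?_
        rw [← Finset.mul_sum, (hQ x y).2, mul_one]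
    _ ≤ _ := Finset.sum_le_sum fun x _ => Finset.sum_le_sum fun y _ =>
        Finset.sum_le_sum fun m _ => hterm x y m

/-- The main chain of inequalities. -/
lemma chain {𝒳 𝒴 M₁ M₂ : Type*} [Fintype 𝒳] [Fintype 𝒴] [Fintype M₁] [Fintype M₂]
    [Nonempty 𝒳] [Nonempty M₁] [Nonempty M₂]
    {ρ : ℝ} (hρ : 0 < ρ) {P : 𝒳 → 𝒴 → ℝ} (hP : IsPMF P)
    {Q : 𝒳 → 𝒴 → M₁ × M₂ → ℝ} (hQ : IsCondPMF Q)
    {G : 𝒳 → 𝒴 × M₁ × M₂ → ℕ} (hG : IsGuessing G) :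
    ∑ y, (∑ x, P x y ^ (1 / (1 + ρ))) ^ (1 + ρ) ≤
      ((Fintype.card M₁ : ℝ) * Fintype.card M₂) ^ ρ *
        ((1 + Real.log (Fintype.card 𝒳)) ^ ρ *
          ∑ x, ∑ y, ∑ m : M₁ × M₂, P x y * Q x y m * (G x (y, m) : ℝ) ^ ρ) := by
  classical
  obtain ⟨hPnn, hPsum⟩ := hP
  have h1ρ : (0 : ℝ) < 1 + ρ := by linarith
  have hα0 : (0 : ℝ) < 1 / (1 + ρ) := by positivity
  have hα1 : 1 / (1 + ρ) ≤ 1 := by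
    rw [div_le_one h1ρ]; linarith
  have hPQ : ∀ x y (m : M₁ × M₂), 0 ≤ P x y * Q x y m :=
    fun x y m => mul_nonneg (hPnn x y) ((hQ x y).1 m)
  have hN0 : (0 : ℝ) < (Fintype.card M₁ : ℝ) * Fintype.card M₂ := by
    have h1 : (0 : ℝ) < (Fintype.card M₁ : ℝ) := by exact_mod_cast Fintype.card_pos
    have h2 : (0 : ℝ) < (Fintype.card M₂ : ℝ) := by exact_mod_cast Fintype.card_pos
    positivity
  have ha0 : ∀ (y : 𝒴) (m : M₁ × M₂), 0 ≤ ∑ x, (P x y * Q x y m) ^ (1 / (1 + ρ)) :=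
    fun y m => Finset.sum_nonneg fun x _ => Real.rpow_nonneg (hPQ x y m) _
  -- step 1: subadditivity in m
  have step1 : ∀ y : 𝒴, ∑ x, P x y ^ (1 / (1 + ρ)) ≤
      ∑ m : M₁ × M₂, ∑ x, (P x y * Q x y m) ^ (1 / (1 + ρ)) := by
    intro y
    have hx : ∀ x, P x y ^ (1 / (1 + ρ)) ≤
        ∑ m : M₁ × M₂, (P x y * Q x y m) ^ (1 / (1 + ρ)) := by
      intro x
      have hPx : P x y = ∑ m : M₁ × M₂, P x y * Q x y m := by
        rw [← Finset.mul_sum, (hQ x y).2, mul_one]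
      calc P x y ^ (1 / (1 + ρ))
          = (∑ m : M₁ × M₂, P x y * Q x y m) ^ (1 / (1 + ρ)) := by rw [← hPx]
        _ ≤ _ := rpow_sum_le_sum_rpow _ _ (fun m => hPQ x y m) hα0 hα1
    calc ∑ x, P x y ^ (1 / (1 + ρ))
        ≤ ∑ x, ∑ m : M₁ × M₂, (P x y * Q x y m) ^ (1 / (1 + ρ)) :=
          Finset.sum_le_sum fun x _ => hx x
      _ = ∑ m : M₁ × M₂, ∑ x, (P x y * Q x y m) ^ (1 / (1 + ρ)) := Finset.sum_comm
  -- step 2: power-mean in m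
  have step2 : ∀ y : 𝒴,
      (∑ m : M₁ × M₂, ∑ x, (P x y * Q x y m) ^ (1 / (1 + ρ))) ^ (1 + ρ) ≤
        ((Fintype.card M₁ : ℝ) * Fintype.card M₂) ^ ρ *
          ∑ m : M₁ × M₂, (∑ x, (P x y * Q x y m) ^ (1 / (1 + ρ))) ^ (1 + ρ) := by
    intro y
    have h := Real.rpow_sum_le_const_mul_sum_rpow_of_nonneg
      (Finset.univ : Finset (M₁ × M₂))
      (f := fun m => ∑ x, (P x y * Q x y m) ^ (1 / (1 + ρ)))
      (by linarith : (1 : ℝ) ≤ 1 + ρ) (fun m _ => ha0 y m)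
    have hcard : ((Finset.univ : Finset (M₁ × M₂)).card : ℝ)
        = (Fintype.card M₁ : ℝ) * Fintype.card M₂ := by
      rw [Finset.card_univ, Fintype.card_prod]
      push_cast
      ring
    have hexp : (1 + ρ) - 1 = ρ := by ring
    rw [hcard, hexp] at h
    exact h
  -- step 3: Arikan bound for each (y, m)
  have step3 : ∀ (y : 𝒴) (m : M₁ × M₂),
      (∑ x, (P x y * Q x y m) ^ (1 / (1 + ρ))) ^ (1 + ρ) ≤
        (1 + Real.log (Fintype.card 𝒳)) ^ ρ *
          ∑ x, P x y * Q x y m * (G x (y, m) : ℝ) ^ ρ := by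
    intro y m
    exact arikan_bound hρ (fun x => P x y * Q x y m) (fun x => hPQ x y m)
      (fun x => G x (y, m)) ((hG (y, m)).1) ((hG (y, m)).2)
  -- reorder the triple sum
  have hEcomm : ∑ x, ∑ y, ∑ m : M₁ × M₂, P x y * Q x y m * (G x (y, m) : ℝ) ^ ρ
      = ∑ y, ∑ m : M₁ × M₂, ∑ x, P x y * Q x y m * (G x (y, m) : ℝ) ^ ρ := by
    rw [Finset.sum_comm]
    exact Finset.sum_congr rfl fun y _ => Finset.sum_comm
  rw [hEcomm]
  calc ∑ y, (∑ x, P x y ^ (1 / (1 + ρ))) ^ (1 + ρ)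
      ≤ ∑ y, (∑ m : M₁ × M₂, ∑ x, (P x y * Q x y m) ^ (1 / (1 + ρ))) ^ (1 + ρ) :=
        Finset.sum_le_sum fun y _ => Real.rpow_le_rpow
          (Finset.sum_nonneg fun x _ => Real.rpow_nonneg (hPnn x y) _) (step1 y) h1ρ.le
    _ ≤ ∑ y, ((Fintype.card M₁ : ℝ) * Fintype.card M₂) ^ ρ *
          ∑ m : M₁ × M₂, (∑ x, (P x y * Q x y m) ^ (1 / (1 + ρ))) ^ (1 + ρ) :=
        Finset.sum_le_sum fun y _ => step2 y
    _ = ((Fintype.card M₁ : ℝ) * Fintype.card M₂) ^ ρ *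
          ∑ y, ∑ m : M₁ × M₂, (∑ x, (P x y * Q x y m) ^ (1 / (1 + ρ))) ^ (1 + ρ) :=
        (Finset.mul_sum _ _ _).symm
    _ ≤ ((Fintype.card M₁ : ℝ) * Fintype.card M₂) ^ ρ *
          ∑ y, ∑ m : M₁ × M₂, ((1 + Real.log (Fintype.card 𝒳)) ^ ρ *
            ∑ x, P x y * Q x y m * (G x (y, m) : ℝ) ^ ρ) := by
        refine mul_le_mul_of_nonneg_left ?_ (Real.rpow_nonneg hN0.le ρ)
        exact Finset.sum_le_sum fun y _ => Finset.sum_le_sum fun m _ => step3 y m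
    _ = ((Fintype.card M₁ : ℝ) * Fintype.card M₂) ^ ρ *
          ((1 + Real.log (Fintype.card 𝒳)) ^ ρ *
            ∑ y, ∑ m : M₁ × M₂, ∑ x, P x y * Q x y m * (G x (y, m) : ℝ) ^ ρ) := by
        simp only [Finset.mul_sum]

end GuessAux

theorem finite_blocklength_guessing_converse_bob
    {𝒳 𝒴 M₁ M₂ : Type*} [Fintype 𝒳] [Fintype 𝒴] [Fintype M₁] [Fintype M₂]
    [Nonempty 𝒳] [Nonempty 𝒴] [Nonempty M₁] [Nonempty M₂]
    (ρ : ℝ) (hρ : 0 < ρ) (P : 𝒳 → 𝒴 → ℝ) (hP : IsPMF P)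
    (Q : 𝒳 → 𝒴 → M₁ × M₂ → ℝ) (hQ : IsCondPMF Q) :
    max ((1 + Real.log (Fintype.card 𝒳)) ^ (-ρ) *
        2 ^ (ρ * (condRenyi (1 / (1 + ρ)) P
          - Real.logb 2 ((Fintype.card M₁ : ℝ) * Fintype.card M₂)))) 1 ≤
      bobGuessAmb ρ P Q := by
  classical
  have h1ρ : (0 : ℝ) < 1 + ρ := by linarith
  obtain ⟨hPnn, hPsum⟩ := hP
  have hN0 : (0 : ℝ) < (Fintype.card M₁ : ℝ) * Fintype.card M₂ := by
    have h1 : (0 : ℝ) < (Fintype.card M₁ : ℝ) := by exact_mod_cast Fintype.card_pos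
    have h2 : (0 : ℝ) < (Fintype.card M₂ : ℝ) := by exact_mod_cast Fintype.card_pos
    positivity
  have hL1 : (1 : ℝ) ≤ 1 + Real.log (Fintype.card 𝒳) := by
    have h : (1 : ℝ) ≤ (Fintype.card 𝒳 : ℝ) := by exact_mod_cast Fintype.card_pos
    have := Real.log_nonneg h
    linarith
  have hL0 : (0 : ℝ) < 1 + Real.log (Fintype.card 𝒳) := lt_of_lt_of_le one_pos hL1
  -- positivity of S
  have hS0 : 0 < ∑ y, (∑ x, P x y ^ (1 / (1 + ρ))) ^ (1 + ρ) := by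
    have hex : ∃ x y, 0 < P x y := by
      by_contra h
      push_neg at h
      have : ∑ x, ∑ y, P x y ≤ 0 :=
        Finset.sum_nonpos fun x _ => Finset.sum_nonpos fun y _ => h x y
      rw [hPsum] at this
      linarith
    obtain ⟨x₀, y₀, hx₀⟩ := hex
    have hy : 0 < ∑ x, P x y₀ ^ (1 / (1 + ρ)) :=
      lt_of_lt_of_le (Real.rpow_pos_of_pos hx₀ _)
        (Finset.single_le_sum (fun x _ => Real.rpow_nonneg (hPnn x y₀) _) (Finset.mem_univ x₀))
    exact lt_of_lt_of_le (Real.rpow_pos_of_pos hy (1 + ρ))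
      (Finset.single_le_sum
        (fun y _ => Real.rpow_nonneg
          (Finset.sum_nonneg fun x _ => Real.rpow_nonneg (hPnn x y) _) _)
        (Finset.mem_univ y₀))
  -- identify the exponential with S / N ^ ρ
  have hcond : (2 : ℝ) ^ (ρ * (condRenyi (1 / (1 + ρ)) P
        - Real.logb 2 ((Fintype.card M₁ : ℝ) * Fintype.card M₂)))
      = (∑ y, (∑ x, P x y ^ (1 / (1 + ρ))) ^ (1 + ρ)) /
          ((Fintype.card M₁ : ℝ) * Fintype.card M₂) ^ ρ := by
    have hfrac : (1 / (1 + ρ)) / (1 - 1 / (1 + ρ)) = 1 / ρ := by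
      have h : 1 - 1 / (1 + ρ) = ρ / (1 + ρ) := by
        field_simp
        ring
      have hne : (1 : ℝ) - 1 / (1 + ρ) ≠ 0 := by
        rw [h]; positivity
      rw [div_eq_iff hne, h]
      field_simp
    have hinv : 1 / (1 / (1 + ρ)) = 1 + ρ := one_div_one_div _
    have hCR : condRenyi (1 / (1 + ρ)) P =
        (1 / ρ) * Real.logb 2 (∑ y, (∑ x, P x y ^ (1 / (1 + ρ))) ^ (1 + ρ)) := by
      rw [condRenyi, hfrac, hinv]
    have hlogN : Real.logb 2 (((Fintype.card M₁ : ℝ) * Fintype.card M₂) ^ ρ)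
        = ρ * Real.logb 2 ((Fintype.card M₁ : ℝ) * Fintype.card M₂) := by
      rw [Real.logb, Real.logb, Real.log_rpow hN0]
      ring
    have harg : ρ * (condRenyi (1 / (1 + ρ)) P
          - Real.logb 2 ((Fintype.card M₁ : ℝ) * Fintype.card M₂))
        = Real.logb 2 ((∑ y, (∑ x, P x y ^ (1 / (1 + ρ))) ^ (1 + ρ)) /
            ((Fintype.card M₁ : ℝ) * Fintype.card M₂) ^ ρ) := by
      rw [hCR, Real.logb_div hS0.ne' (Real.rpow_pos_of_pos hN0 ρ).ne', hlogN]
      field_simp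
    rw [harg]
    exact Real.rpow_logb two_pos (by norm_num)
      (div_pos hS0 (Real.rpow_pos_of_pos hN0 ρ))
  rw [hcond, bobGuessAmb]
  refine le_csInf ⟨_, fun x _ => ((Fintype.equivFin 𝒳 x : ℕ) + 1), fun w => ⟨?_, ?_⟩, rfl⟩ ?_
  · intro x x' h
    simp only at h
    exact (Fintype.equivFin 𝒳).injective (Fin.val_injective (Nat.succ_injective h))
  · intro x
    rw [Finset.mem_Icc]
    exact ⟨Nat.succ_le_succ (Nat.zero_le _), Nat.succ_le_of_lt (Fin.is_lt _)⟩
  · rintro e ⟨G, hG, rfl⟩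
    have hE1 : (1 : ℝ) ≤ ∑ x, ∑ y, ∑ m : M₁ × M₂,
        P x y * Q x y m * (G x (y, m) : ℝ) ^ ρ :=
      GuessAux.one_le_moment hρ ⟨hPnn, hPsum⟩ hQ hG
    have hchain := GuessAux.chain hρ ⟨hPnn, hPsum⟩ hQ hG
    refine max_le ?_ hE1
    rw [Real.rpow_neg hL0.le, inv_mul_le_iff₀ (Real.rpow_pos_of_pos hL0 ρ),
        div_le_iff₀ (Real.rpow_pos_of_pos hN0 ρ)]
    calc ∑ y, (∑ x, P x y ^ (1 / (1 + ρ))) ^ (1 + ρ)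
        ≤ ((Fintype.card M₁ : ℝ) * Fintype.card M₂) ^ ρ *
            ((1 + Real.log (Fintype.card 𝒳)) ^ ρ *
              ∑ x, ∑ y, ∑ m : M₁ × M₂, P x y * Q x y m * (G x (y, m) : ℝ) ^ ρ) := hchain
      _ = (1 + Real.log (Fintype.card 𝒳)) ^ ρ *
            (∑ x, ∑ y, ∑ m : M₁ × M₂, P x y * Q x y m * (G x (y, m) : ℝ) ^ ρ) *
            ((Fintype.card M₁ : ℝ) * Fintype.card M₂) ^ ρ := by ring
end
end

section
/- For every stochastic encoder Q with hint sets ℳ₁, ℳ₂, Eve's ambiguity is upper-bounded by A_E(Q) ≤ min( min(|ℳ₁|,|ℳ₂|)^ρ · A_B^g(Q), 2^{ρ·H_ᾱ(X|Y)} ). -/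
open Real Finset Filter
open scoped Classical

noncomputable section

namespace GuessAux

variable {𝒳 : Type*} [Fintype 𝒳] {β : Type*} [LinearOrder β]

def rankOf (k : 𝒳 → β) (x : 𝒳) : ℕ := (Finset.univ.filter fun x' => k x' ≤ k x).card

lemma rankOf_lt_rankOf {k : 𝒳 → β} {a b : 𝒳} (h : k a < k b) : rankOf k a < rankOf k b := by
  apply Finset.card_lt_card
  have hsub : (Finset.univ.filter fun x' => k x' ≤ k a) ⊆
      (Finset.univ.filter fun x' => k x' ≤ k b) := by
    intro x hx
    simp only [Finset.mem_filter, Finset.mem_univ, true_and] at hx ⊢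
    exact hx.trans h.le
  refine (Finset.ssubset_iff_of_subset hsub).mpr ⟨b, ?_, ?_⟩
  · simp
  · simp [not_le.mpr h]

lemma rankOf_injective {k : 𝒳 → β} (hk : Function.Injective k) :
    Function.Injective (rankOf k) := by
  intro a b hab
  by_contra hne
  rcases (hk.ne hne).lt_or_gt with h | h
  · exact absurd hab (rankOf_lt_rankOf h).ne
  · exact absurd hab.symm (rankOf_lt_rankOf h).ne

lemma one_le_rankOf (k : 𝒳 → β) (x : 𝒳) : 1 ≤ rankOf k x := by
  have : x ∈ Finset.univ.filter fun x' => k x' ≤ k x := by simp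
  exact Finset.card_pos.mpr ⟨x, this⟩

lemma rankOf_le_card (k : 𝒳 → β) (x : 𝒳) : rankOf k x ≤ Fintype.card 𝒳 :=
  le_trans (Finset.card_filter_le _ _) (by simp)

lemma natkey_le {n : ℕ} {f idx' : 𝒳 → ℕ} (h : ∀ x, idx' x < n) {a b : 𝒳}
    (hab : n * f a + idx' a ≤ n * f b + idx' b) : f a ≤ f b := by
  by_contra hlt
  push_neg at hlt
  have h1 : n * f b + idx' b < n * f b + n := by have := h b; omega
  have h2 : n * f b + n = n * (f b + 1) := by ring
  have h3 : n * (f b + 1) ≤ n * f a := Nat.mul_le_mul_left _ hlt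
  omega

lemma natkey_inj {n : ℕ} {f idx' : 𝒳 → ℕ} (h : ∀ x, idx' x < n)
    (hinj : Function.Injective idx') :
    Function.Injective (fun x => n * f x + idx' x) := by
  intro a b hab
  simp only at hab
  have h1 : f a ≤ f b := natkey_le h hab.le
  have h2 : f b ≤ f a := natkey_le h hab.ge
  have hfe : f a = f b := le_antisymm h1 h2
  rw [hfe] at hab
  have : idx' a = idx' b := by omega
  exact hinj this

lemma card_filter_le_of_guessing {W : Type*} {G : 𝒳 → W → ℕ} (hG : IsGuessing G)
    (w : W) (t : ℕ) : (Finset.univ.filter fun x => G x w ≤ t).card ≤ t := by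
  have h := (Finset.card_le_card_of_injOn (s := Finset.univ.filter fun x => G x w ≤ t)
    (t := Finset.Icc 1 t) (fun x => G x w) ?_ ?_)
  · simpa using h
  · intro x hx
    simp only [Finset.mem_coe, Finset.mem_filter, Finset.mem_univ, true_and] at hx
    exact Finset.mem_coe.mpr (Finset.mem_Icc.mpr ⟨(Finset.mem_Icc.mp ((hG w).2 x)).1, hx⟩)
  · exact fun a _ b _ hab => (hG w).1 hab

end GuessAux

open GuessAux in
theorem finite_blocklength_guessing_converse_eve
    {𝒳 𝒴 M₁ M₂ : Type*} [Fintype 𝒳] [Fintype 𝒴] [Fintype M₁] [Fintype M₂]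
    [Nonempty 𝒳] [Nonempty 𝒴] [Nonempty M₁] [Nonempty M₂]
    (ρ : ℝ) (hρ : 0 < ρ) (P : 𝒳 → 𝒴 → ℝ) (hP : IsPMF P)
    (Q : 𝒳 → 𝒴 → M₁ × M₂ → ℝ) (hQ : IsCondPMF Q) :
    eveAmb ρ P Q ≤
      min ((min (Fintype.card M₁) (Fintype.card M₂) : ℝ) ^ ρ * bobGuessAmb ρ P Q)
        (2 ^ (ρ * condRenyi (1 / (1 + ρ)) P)) := by
  classical
  obtain ⟨hPnn, hPsum⟩ := hP
  have hQnn : ∀ x y m, 0 ≤ Q x y m := fun x y m => (hQ x y).1 m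
  have hQsum : ∀ x y, ∑ m, Q x y m = 1 := fun x y => (hQ x y).2
  set n := Fintype.card 𝒳 with hn
  have hnpos : 0 < n := Fintype.card_pos
  set idx : 𝒳 → ℕ := fun x => (Fintype.equivFin 𝒳 x : ℕ) with hidxdef
  have hidx_inj : Function.Injective idx := fun a b h => (Fintype.equivFin 𝒳).injective (Fin.ext h)
  have hidx_lt : ∀ x, idx x < n := fun x => (Fintype.equivFin 𝒳 x).isLt
  -- eveAmb is at most any achievable Eve value
  have hEveLe : ∀ (G₁ : 𝒳 → 𝒴 × M₁ → ℕ) (G₂ : 𝒳 → 𝒴 × M₂ → ℕ), IsGuessing G₁ → IsGuessing G₂ →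
      eveAmb ρ P Q ≤ ∑ x, ∑ y, ∑ m : M₁ × M₂, P x y * Q x y m *
        ((min (G₁ x (y, m.1)) (G₂ x (y, m.2)) : ℕ) : ℝ) ^ ρ := by
    intro G₁ G₂ h₁ h₂
    apply csInf_le
    · refine ⟨0, ?_⟩
      rintro e ⟨G₁', G₂', _, _, rfl⟩
      refine Finset.sum_nonneg fun x _ => Finset.sum_nonneg fun y _ =>
        Finset.sum_nonneg fun m _ => ?_
      have : (0:ℝ) ≤ ((min (G₁' x (y, m.1)) (G₂' x (y, m.2)) : ℕ) : ℝ) ^ ρ :=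
        Real.rpow_nonneg (Nat.cast_nonneg _) _
      exact mul_nonneg (mul_nonneg (hPnn x y) (hQnn x y m)) this
    · exact ⟨G₁, G₂, h₁, h₂, rfl⟩
  have hBound1 : eveAmb ρ P Q ≤
      ((min (Fintype.card M₁) (Fintype.card M₂) : ℕ) : ℝ) ^ ρ * bobGuessAmb ρ P Q := by
    set c : ℕ := min (Fintype.card M₁) (Fintype.card M₂) with hc
    have hc1 : 1 ≤ c := le_min Fintype.card_pos Fintype.card_pos
    have hcpos : (0:ℝ) < (c:ℝ) := by exact_mod_cast hc1
    have hcρ : (0:ℝ) < (c:ℝ) ^ ρ := Real.rpow_pos_of_pos hcpos ρ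
    -- for every Bob guessing function, Eve achieves at most c^ρ times its value
    have key : ∀ e ∈ { e | ∃ G : 𝒳 → 𝒴 × M₁ × M₂ → ℕ, IsGuessing G ∧
        e = ∑ x, ∑ y, ∑ m : M₁ × M₂, P x y * Q x y m * (G x (y, m) : ℝ) ^ ρ },
        eveAmb ρ P Q ≤ (c:ℝ) ^ ρ * e := by
      rintro e ⟨G, hG, rfl⟩
      set f₁ : 𝒴 × M₁ → 𝒳 → ℕ :=
        fun w x => Finset.univ.inf' Finset.univ_nonempty (fun m₂ : M₂ => G x (w.1, w.2, m₂)) with hf₁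
      set f₂ : 𝒴 × M₂ → 𝒳 → ℕ :=
        fun w x => Finset.univ.inf' Finset.univ_nonempty (fun m₁ : M₁ => G x (w.1, m₁, w.2)) with hf₂
      set G₁ : 𝒳 → 𝒴 × M₁ → ℕ := fun x w => rankOf (fun x' => n * f₁ w x' + idx x') x with hG₁
      set G₂ : 𝒳 → 𝒴 × M₂ → ℕ := fun x w => rankOf (fun x' => n * f₂ w x' + idx x') x with hG₂
      have hG₁g : IsGuessing G₁ := fun w =>
        ⟨rankOf_injective (natkey_inj hidx_lt hidx_inj), fun x =>
          Finset.mem_Icc.mpr ⟨one_le_rankOf _ x, rankOf_le_card _ x⟩⟩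
      have hG₂g : IsGuessing G₂ := fun w =>
        ⟨rankOf_injective (natkey_inj hidx_lt hidx_inj), fun x =>
          Finset.mem_Icc.mpr ⟨one_le_rankOf _ x, rankOf_le_card _ x⟩⟩
      -- rank bound via counting
      have hcount₁ : ∀ (w : 𝒴 × M₁) (t : ℕ),
          (Finset.univ.filter fun x => f₁ w x ≤ t).card ≤ Fintype.card M₂ * t := by
        intro w t
        have hsub : (Finset.univ.filter fun x => f₁ w x ≤ t) ⊆
            Finset.univ.biUnion (fun m₂ : M₂ =>
              Finset.univ.filter fun x => G x (w.1, w.2, m₂) ≤ t) := by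
          intro x hx
          simp only [Finset.mem_filter, Finset.mem_univ, true_and, hf₁] at hx
          obtain ⟨m₂, _, hm₂⟩ := Finset.inf'_le_iff _ |>.mp hx
          exact Finset.mem_biUnion.mpr ⟨m₂, Finset.mem_univ _, by
            simp only [Finset.mem_filter, Finset.mem_univ, true_and]; exact hm₂⟩
        calc (Finset.univ.filter fun x => f₁ w x ≤ t).card
            ≤ (Finset.univ.biUnion (fun m₂ : M₂ =>
                Finset.univ.filter fun x => G x (w.1, w.2, m₂) ≤ t)).card :=
              Finset.card_le_card hsub
          _ ≤ ∑ m₂ : M₂, (Finset.univ.filter fun x => G x (w.1, w.2, m₂) ≤ t).card :=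
              Finset.card_biUnion_le
          _ ≤ ∑ _m₂ : M₂, t := Finset.sum_le_sum fun m₂ _ =>
              card_filter_le_of_guessing hG (w.1, w.2, m₂) t
          _ = Fintype.card M₂ * t := by simp [Finset.sum_const, mul_comm]
      have hcount₂ : ∀ (w : 𝒴 × M₂) (t : ℕ),
          (Finset.univ.filter fun x => f₂ w x ≤ t).card ≤ Fintype.card M₁ * t := by
        intro w t
        have hsub : (Finset.univ.filter fun x => f₂ w x ≤ t) ⊆
            Finset.univ.biUnion (fun m₁ : M₁ =>
              Finset.univ.filter fun x => G x (w.1, m₁, w.2) ≤ t) := by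
          intro x hx
          simp only [Finset.mem_filter, Finset.mem_univ, true_and, hf₂] at hx
          obtain ⟨m₁, _, hm₁⟩ := Finset.inf'_le_iff _ |>.mp hx
          exact Finset.mem_biUnion.mpr ⟨m₁, Finset.mem_univ _, by
            simp only [Finset.mem_filter, Finset.mem_univ, true_and]; exact hm₁⟩
        calc (Finset.univ.filter fun x => f₂ w x ≤ t).card
            ≤ (Finset.univ.biUnion (fun m₁ : M₁ =>
                Finset.univ.filter fun x => G x (w.1, m₁, w.2) ≤ t)).card :=
              Finset.card_le_card hsub
          _ ≤ ∑ m₁ : M₁, (Finset.univ.filter fun x => G x (w.1, m₁, w.2) ≤ t).card :=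
              Finset.card_biUnion_le
          _ ≤ ∑ _m₁ : M₁, t := Finset.sum_le_sum fun m₁ _ =>
              card_filter_le_of_guessing hG (w.1, m₁, w.2) t
          _ = Fintype.card M₁ * t := by simp [Finset.sum_const, mul_comm]
      have hmin : ∀ x y (m : M₁ × M₂),
          min (G₁ x (y, m.1)) (G₂ x (y, m.2)) ≤ c * G x (y, m) := by
        intro x y m
        have hb₁ : G₁ x (y, m.1) ≤ Fintype.card M₂ * G x (y, m) := by
          have hsub : (Finset.univ.filter fun x' =>
              n * f₁ (y, m.1) x' + idx x' ≤ n * f₁ (y, m.1) x + idx x) ⊆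
              Finset.univ.filter fun x' => f₁ (y, m.1) x' ≤ f₁ (y, m.1) x := by
            intro x' hx'
            simp only [Finset.mem_filter, Finset.mem_univ, true_and] at hx' ⊢
            exact natkey_le hidx_lt hx'
          have h1 : G₁ x (y, m.1) ≤ (Finset.univ.filter fun x' =>
              f₁ (y, m.1) x' ≤ f₁ (y, m.1) x).card := Finset.card_le_card hsub
          have h2 := hcount₁ (y, m.1) (f₁ (y, m.1) x)
          have h3 : f₁ (y, m.1) x ≤ G x (y, m) := by
            exact Finset.inf'_le (b := m.2)
              (fun m₂ : M₂ => G x (y, m.1, m₂)) (Finset.mem_univ m.2)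
          calc G₁ x (y, m.1) ≤ Fintype.card M₂ * f₁ (y, m.1) x := h1.trans h2
            _ ≤ Fintype.card M₂ * G x (y, m) := Nat.mul_le_mul_left _ h3
        have hb₂ : G₂ x (y, m.2) ≤ Fintype.card M₁ * G x (y, m) := by
          have hsub : (Finset.univ.filter fun x' =>
              n * f₂ (y, m.2) x' + idx x' ≤ n * f₂ (y, m.2) x + idx x) ⊆
              Finset.univ.filter fun x' => f₂ (y, m.2) x' ≤ f₂ (y, m.2) x := by
            intro x' hx'
            simp only [Finset.mem_filter, Finset.mem_univ, true_and] at hx' ⊢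
            exact natkey_le hidx_lt hx'
          have h1 : G₂ x (y, m.2) ≤ (Finset.univ.filter fun x' =>
              f₂ (y, m.2) x' ≤ f₂ (y, m.2) x).card := Finset.card_le_card hsub
          have h2 := hcount₂ (y, m.2) (f₂ (y, m.2) x)
          have h3 : f₂ (y, m.2) x ≤ G x (y, m) := by
            exact Finset.inf'_le (b := m.1)
              (fun m₁ : M₁ => G x (y, m₁, m.2)) (Finset.mem_univ m.1)
          calc G₂ x (y, m.2) ≤ Fintype.card M₁ * f₂ (y, m.2) x := h1.trans h2
            _ ≤ Fintype.card M₁ * G x (y, m) := Nat.mul_le_mul_left _ h3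
        rcases le_total (Fintype.card M₁) (Fintype.card M₂) with h | h
        · have : c = Fintype.card M₁ := min_eq_left h
          rw [this]
          exact le_trans (min_le_right _ _) hb₂
        · have : c = Fintype.card M₂ := min_eq_right h
          rw [this]
          exact le_trans (min_le_left _ _) hb₁
      refine le_trans (hEveLe G₁ G₂ hG₁g hG₂g) ?_
      have hterm : ∀ x y (m : M₁ × M₂),
          P x y * Q x y m * ((min (G₁ x (y, m.1)) (G₂ x (y, m.2)) : ℕ) : ℝ) ^ ρ ≤
          (c:ℝ) ^ ρ * (P x y * Q x y m * (G x (y, m) : ℝ) ^ ρ) := by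
        intro x y m
        have hpq : (0:ℝ) ≤ P x y * Q x y m := mul_nonneg (hPnn x y) (hQnn x y m)
        have hcast : ((min (G₁ x (y, m.1)) (G₂ x (y, m.2)) : ℕ) : ℝ) ≤
            (c:ℝ) * (G x (y, m) : ℝ) := by
          have := hmin x y m
          exact_mod_cast this
        have hr : ((min (G₁ x (y, m.1)) (G₂ x (y, m.2)) : ℕ) : ℝ) ^ ρ ≤
            ((c:ℝ) * (G x (y, m) : ℝ)) ^ ρ :=
          Real.rpow_le_rpow (Nat.cast_nonneg _) hcast hρ.le
        have hmul : ((c:ℝ) * (G x (y, m) : ℝ)) ^ ρ = (c:ℝ) ^ ρ * (G x (y, m) : ℝ) ^ ρ :=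
          Real.mul_rpow (Nat.cast_nonneg _) (Nat.cast_nonneg _)
        calc P x y * Q x y m * ((min (G₁ x (y, m.1)) (G₂ x (y, m.2)) : ℕ) : ℝ) ^ ρ
            ≤ P x y * Q x y m * ((c:ℝ) ^ ρ * (G x (y, m) : ℝ) ^ ρ) := by
              rw [← hmul]; exact mul_le_mul_of_nonneg_left hr hpq
          _ = (c:ℝ) ^ ρ * (P x y * Q x y m * (G x (y, m) : ℝ) ^ ρ) := by ring
      calc (∑ x, ∑ y, ∑ m : M₁ × M₂, P x y * Q x y m *
              ((min (G₁ x (y, m.1)) (G₂ x (y, m.2)) : ℕ) : ℝ) ^ ρ)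
          ≤ ∑ x, ∑ y, ∑ m : M₁ × M₂,
              (c:ℝ) ^ ρ * (P x y * Q x y m * (G x (y, m) : ℝ) ^ ρ) :=
            Finset.sum_le_sum fun x _ => Finset.sum_le_sum fun y _ =>
              Finset.sum_le_sum fun m _ => hterm x y m
        _ = (c:ℝ) ^ ρ * ∑ x, ∑ y, ∑ m : M₁ × M₂,
              P x y * Q x y m * (G x (y, m) : ℝ) ^ ρ := by
            simp only [← Finset.mul_sum]
    -- conclude via the infimum
    have hne : { e | ∃ G : 𝒳 → 𝒴 × M₁ × M₂ → ℕ, IsGuessing G ∧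
        e = ∑ x, ∑ y, ∑ m : M₁ × M₂, P x y * Q x y m * (G x (y, m) : ℝ) ^ ρ }.Nonempty := by
      refine ⟨_, fun x _ => idx x + 1, fun w => ⟨?_, ?_⟩, rfl⟩
      · intro a b hab
        simpa using hidx_inj (by simpa using hab)
      · intro x
        have h2 : idx x < Fintype.card 𝒳 := hn ▸ hidx_lt x
        simp only [Finset.mem_Icc]
        omega
    have hdiv : eveAmb ρ P Q / (c:ℝ) ^ ρ ≤ bobGuessAmb ρ P Q := by
      apply le_csInf hne
      intro b hb
      rw [div_le_iff₀ hcρ]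
      calc eveAmb ρ P Q ≤ (c:ℝ) ^ ρ * b := key b hb
        _ = b * (c:ℝ) ^ ρ := mul_comm _ _
    calc eveAmb ρ P Q = eveAmb ρ P Q / (c:ℝ) ^ ρ * (c:ℝ) ^ ρ := by
          field_simp
      _ ≤ bobGuessAmb ρ P Q * (c:ℝ) ^ ρ := by
          exact mul_le_mul_of_nonneg_right hdiv hcρ.le
      _ = (c:ℝ) ^ ρ * bobGuessAmb ρ P Q := mul_comm _ _
  have hBound2 : eveAmb ρ P Q ≤ 2 ^ (ρ * condRenyi (1 / (1 + ρ)) P) := by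
    set α : ℝ := 1 / (1 + ρ) with hα
    have h1ρ : (0:ℝ) < 1 + ρ := by linarith
    have hαpos : 0 < α := by rw [hα]; positivity
    have hαρ : 1 - α * ρ = α := by rw [hα]; field_simp; ring
    have hinvα : 1 / α = 1 + ρ := by rw [hα]; field_simp
    set T : 𝒴 → ℝ := fun y => ∑ x, P x y ^ α with hT
    have hTnn : ∀ y, 0 ≤ T y := fun y =>
      Finset.sum_nonneg fun x _ => Real.rpow_nonneg (hPnn x y) α
    set k : 𝒴 → 𝒳 → ℝ ×ₗ ℕ := fun y x => toLex (-(P x y), idx x) with hk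
    have hkinj : ∀ y, Function.Injective (k y) := by
      intro y a b hab
      have h2 : (ofLex (k y a)).2 = (ofLex (k y b)).2 := congrArg (fun p => (ofLex p).2) hab
      exact hidx_inj h2
    set Gy : 𝒴 → 𝒳 → ℕ := fun y x => rankOf (k y) x with hGy
    have hGyg : ∀ y, Function.Injective (Gy y) ∧
        ∀ x, Gy y x ∈ Finset.Icc 1 (Fintype.card 𝒳) := fun y =>
      ⟨rankOf_injective (hkinj y), fun x =>
        Finset.mem_Icc.mpr ⟨one_le_rankOf _ x, rankOf_le_card _ x⟩⟩
    have hrank : ∀ y x, 0 < P x y → (Gy y x : ℝ) * P x y ^ α ≤ T y := by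
      intro y x hx
      have hsub1 : ∀ x', k y x' ≤ k y x → P x y ≤ P x' y := by
        intro x' h
        rcases (Prod.Lex.le_iff).mp h with h' | h'
        · have : -(P x' y) < -(P x y) := h'
          linarith
        · have : -(P x' y) = -(P x y) := h'.1
          linarith
      set S := Finset.univ.filter fun x' => k y x' ≤ k y x with hS
      have hcard : Gy y x = S.card := rfl
      have heq : (Gy y x : ℝ) * P x y ^ α = ∑ _x' ∈ S, P x y ^ α := by
        rw [Finset.sum_const, nsmul_eq_mul, hcard]
      rw [heq]
      calc (∑ _x' ∈ S, P x y ^ α) ≤ ∑ x' ∈ S, P x' y ^ α := by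
            refine Finset.sum_le_sum fun x' hx' => ?_
            simp only [hS, Finset.mem_filter, Finset.mem_univ, true_and] at hx'
            exact Real.rpow_le_rpow (hPnn x y) (hsub1 x' hx') hαpos.le
        _ ≤ ∑ x', P x' y ^ α := Finset.sum_le_sum_of_subset_of_nonneg
            (Finset.subset_univ S) (fun x' _ _ => Real.rpow_nonneg (hPnn x' y) α)
        _ = T y := rfl
    have hterm : ∀ x y, P x y * (Gy y x : ℝ) ^ ρ ≤ P x y ^ α * T y ^ ρ := by
      intro x y
      rcases eq_or_lt_of_le (hPnn x y) with h0 | hpos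
      · rw [← h0]
        simp [Real.zero_rpow hαpos.ne']
      · have hPα : (0:ℝ) < P x y ^ α := Real.rpow_pos_of_pos hpos α
        have h1 : (Gy y x : ℝ) ≤ T y / P x y ^ α := by
          rw [le_div_iff₀ hPα]; exact hrank y x hpos
        have h2 : (Gy y x : ℝ) ^ ρ ≤ (T y / P x y ^ α) ^ ρ :=
          Real.rpow_le_rpow (Nat.cast_nonneg _) h1 hρ.le
        have h3 : (T y / P x y ^ α) ^ ρ = T y ^ ρ / P x y ^ (α * ρ) := by
          rw [Real.div_rpow (hTnn y) hPα.le, ← Real.rpow_mul (hPnn x y)]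
        calc P x y * (Gy y x : ℝ) ^ ρ ≤ P x y * (T y ^ ρ / P x y ^ (α * ρ)) := by
              rw [← h3]; exact mul_le_mul_of_nonneg_left h2 (hPnn x y)
          _ = P x y ^ ((1:ℝ) - α * ρ) * T y ^ ρ := by
              rw [Real.rpow_sub hpos, Real.rpow_one]; ring
          _ = P x y ^ α * T y ^ ρ := by rw [hαρ]
    have hEv : eveAmb ρ P Q ≤ ∑ x, ∑ y, ∑ m : M₁ × M₂, P x y * Q x y m *
        ((min (Gy y x) (Gy y x) : ℕ) : ℝ) ^ ρ :=
      hEveLe (fun x w => Gy w.1 x) (fun x w => Gy w.1 x)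
        (fun w => hGyg w.1) (fun w => hGyg w.1)
    refine hEv.trans ?_
    -- positivity of the entropy sum
    have hex : ∃ x y, 0 < P x y := by
      by_contra h
      push_neg at h
      have hle : ∑ x, ∑ y, P x y ≤ 0 :=
        Finset.sum_nonpos fun x _ => Finset.sum_nonpos fun y _ => h x y
      linarith [hPsum]
    obtain ⟨x0, y0, hx0⟩ := hex
    have hTy0 : 0 < T y0 :=
      lt_of_lt_of_le (Real.rpow_pos_of_pos hx0 α)
        (Finset.single_le_sum (fun x _ => Real.rpow_nonneg (hPnn x y0) α) (Finset.mem_univ x0))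
    have hSpos : 0 < ∑ y, T y ^ ((1:ℝ) + ρ) :=
      Finset.sum_pos' (fun y _ => Real.rpow_nonneg (hTnn y) _)
        ⟨y0, Finset.mem_univ y0, Real.rpow_pos_of_pos hTy0 _⟩
    have hfinal : (2:ℝ) ^ (ρ * condRenyi α P) = ∑ y, T y ^ ((1:ℝ) + ρ) := by
      have hS' : (∑ y, (∑ x, P x y ^ α) ^ (1 / α)) = ∑ y, T y ^ ((1:ℝ) + ρ) := by
        refine Finset.sum_congr rfl fun y _ => ?_
        rw [hinvα]
      have hfrac : ρ * (α / (1 - α)) = 1 := by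
        rw [hα]
        have : (1:ℝ) - 1 / (1 + ρ) = ρ / (1 + ρ) := by field_simp; ring
        rw [this]
        field_simp
      have : ρ * condRenyi α P = Real.logb 2 (∑ y, T y ^ ((1:ℝ) + ρ)) := by
        rw [condRenyi, hS', ← mul_assoc, hfrac, one_mul]
      rw [this]
      exact Real.rpow_logb (by norm_num) (by norm_num) hSpos
    rw [hfinal]
    have hstep : ∀ x y, (∑ m : M₁ × M₂, P x y * Q x y m *
        ((min (Gy y x) (Gy y x) : ℕ) : ℝ) ^ ρ) = P x y * (Gy y x : ℝ) ^ ρ := by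
      intro x y
      simp only [min_self]
      calc (∑ m : M₁ × M₂, P x y * Q x y m * (Gy y x : ℝ) ^ ρ)
          = (∑ m : M₁ × M₂, Q x y m) * (P x y * (Gy y x : ℝ) ^ ρ) := by
            rw [Finset.sum_mul]
            exact Finset.sum_congr rfl fun m _ => by ring
        _ = P x y * (Gy y x : ℝ) ^ ρ := by rw [hQsum]; ring
    calc (∑ x, ∑ y, ∑ m : M₁ × M₂, P x y * Q x y m *
            ((min (Gy y x) (Gy y x) : ℕ) : ℝ) ^ ρ)
        = ∑ x, ∑ y, P x y * (Gy y x : ℝ) ^ ρ :=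
          Finset.sum_congr rfl fun x _ => Finset.sum_congr rfl fun y _ => hstep x y
      _ ≤ ∑ x, ∑ y, P x y ^ α * T y ^ ρ :=
          Finset.sum_le_sum fun x _ => Finset.sum_le_sum fun y _ => hterm x y
      _ = ∑ y, ∑ x, P x y ^ α * T y ^ ρ := Finset.sum_comm
      _ = ∑ y, T y ^ ((1:ℝ) + ρ) := by
          refine Finset.sum_congr rfl fun y _ => ?_
          rw [← Finset.sum_mul,
            Real.rpow_add' (hTnn y) (by positivity), Real.rpow_one]
  exact le_min (by exact_mod_cast hBound1) hBound2
end
end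

section
/- For every stochastic encoder Q with hint sets ℳ₁, ℳ₂, Bob's list ambiguity is lower-bounded by A_B^l(Q) ≥ max( 2^{ρ(H_ᾱ(X|Y) − log(|ℳ₁|·|ℳ₂|))}, 1 ). -/
open Real Finset Filter
open scoped Classical

noncomputable section

/-- Power-mean inequality: `(∑ f)^p ≤ n^(p-1) * ∑ f^p` for `p ≥ 1`. -/
lemma sum_rpow_le_card_rpow_mul {ι : Type*} (s : Finset ι) (f : ι → ℝ)
    (hf : ∀ i ∈ s, 0 ≤ f i) {p : ℝ} (hp : 1 ≤ p) :
    (∑ i ∈ s, f i) ^ p ≤ (s.card : ℝ) ^ (p - 1) * ∑ i ∈ s, f i ^ p := by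
  rcases s.eq_empty_or_nonempty with rfl | hs
  · simp [Real.zero_rpow (by linarith : p ≠ 0)]
  have hn : (0:ℝ) < s.card := by exact_mod_cast hs.card_pos
  have hw : ∀ i ∈ s, (0:ℝ) ≤ (s.card:ℝ)⁻¹ := fun i _ => by positivity
  have hw' : ∑ _i ∈ s, (s.card:ℝ)⁻¹ = 1 := by
    rw [Finset.sum_const, nsmul_eq_mul]
    field_simp
  have h := Real.rpow_arith_mean_le_arith_mean_rpow s (fun _ => (s.card:ℝ)⁻¹) f hw hw' hf hp
  rw [← Finset.mul_sum, Real.mul_rpow (by positivity) (Finset.sum_nonneg hf),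
    ← Finset.mul_sum] at h
  have key : (∑ i ∈ s, f i) ^ p
      = (s.card:ℝ) ^ p * ((s.card:ℝ)⁻¹ ^ p * (∑ i ∈ s, f i) ^ p) := by
    rw [Real.inv_rpow hn.le]
    field_simp
  rw [key]
  calc (s.card:ℝ) ^ p * ((s.card:ℝ)⁻¹ ^ p * (∑ i ∈ s, f i) ^ p)
      ≤ (s.card:ℝ) ^ p * ((s.card:ℝ)⁻¹ * ∑ i ∈ s, f i ^ p) :=
        mul_le_mul_of_nonneg_left h (Real.rpow_nonneg hn.le _)
    _ = (s.card:ℝ) ^ (p - 1) * ∑ i ∈ s, f i ^ p := by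
        rw [← mul_assoc, show p - 1 = p + (-1) by ring, Real.rpow_add hn,
          Real.rpow_neg_one]

theorem finite_blocklength_list_converse_bob
    {𝒳 𝒴 M₁ M₂ : Type*} [Fintype 𝒳] [Fintype 𝒴] [Fintype M₁] [Fintype M₂]
    [Nonempty 𝒳] [Nonempty 𝒴] [Nonempty M₁] [Nonempty M₂]
    (ρ : ℝ) (hρ : 0 < ρ) (P : 𝒳 → 𝒴 → ℝ) (hP : IsPMF P)
    (Q : 𝒳 → 𝒴 → M₁ × M₂ → ℝ) (hQ : IsCondPMF Q) :
    max (2 ^ (ρ * (condRenyi (1 / (1 + ρ)) P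
        - Real.logb 2 ((Fintype.card M₁ : ℝ) * Fintype.card M₂)))) 1 ≤
      bobListAmb ρ P Q := by
  obtain ⟨hPnn, hPsum⟩ := hP
  have hQnn : ∀ x y m, 0 ≤ Q x y m := fun x y m => (hQ x y).1 m
  have hQsum : ∀ x y, ∑ m : M₁ × M₂, Q x y m = 1 := fun x y => (hQ x y).2
  have h1ρ : (0:ℝ) < 1 + ρ := by linarith
  set α : ℝ := 1 / (1 + ρ) with hα
  have hα0 : 0 < α := by positivity
  have hα1 : α < 1 := by
    rw [hα, div_lt_one h1ρ]; linarith
  have hαmul : α * (1 + ρ) = 1 := by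
    rw [hα]; field_simp
  have hann : ∀ x y m, 0 ≤ P x y * Q x y m := fun x y m =>
    mul_nonneg (hPnn x y) (hQnn x y m)
  -- rewrite bobListAmb
  have hre : bobListAmb ρ P Q = ∑ y, ∑ m : M₁ × M₂, (∑ x, P x y * Q x y m) *
      ((Finset.univ.filter fun x' => 0 < P x' y * Q x' y m).card : ℝ) ^ ρ := by
    unfold bobListAmb
    rw [Finset.sum_comm]
    refine Finset.sum_congr rfl fun y _ => ?_
    rw [Finset.sum_comm]
    exact Finset.sum_congr rfl fun m _ => (Finset.sum_mul _ _ _).symm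
  -- the `1 ≤` part
  have hone : (1:ℝ) ≤ bobListAmb ρ P Q := by
    have hlow : ∑ x, ∑ y, ∑ m : M₁ × M₂, P x y * Q x y m ≤ bobListAmb ρ P Q := by
      unfold bobListAmb
      refine Finset.sum_le_sum fun x _ => Finset.sum_le_sum fun y _ =>
        Finset.sum_le_sum fun m _ => ?_
      rcases eq_or_lt_of_le (hann x y m) with h0 | h0
      · rw [← h0]; simp
      · have hmem : x ∈ Finset.univ.filter fun x' => 0 < P x' y * Q x' y m := by
          simp [h0]
        have hcard : (1:ℝ) ≤ ((Finset.univ.filter fun x' =>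
            0 < P x' y * Q x' y m).card : ℝ) := by
          exact_mod_cast Finset.card_pos.mpr ⟨x, hmem⟩
        have : (1:ℝ) ≤ ((Finset.univ.filter fun x' =>
            0 < P x' y * Q x' y m).card : ℝ) ^ ρ :=
          Real.one_le_rpow hcard hρ.le
        exact le_mul_of_one_le_right (hann x y m) this
    have heq : ∑ x, ∑ y, ∑ m : M₁ × M₂, P x y * Q x y m = 1 := by
      rw [← hPsum]
      refine Finset.sum_congr rfl fun x _ => Finset.sum_congr rfl fun y _ => ?_
      rw [← Finset.mul_sum, hQsum, mul_one]
    linarith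
  -- the entropy part
  set g : 𝒴 → M₁ × M₂ → ℝ := fun y m => ∑ x, (P x y * Q x y m) ^ α with hg
  have hgnn : ∀ y m, 0 ≤ g y m := fun y m =>
    Finset.sum_nonneg fun x _ => Real.rpow_nonneg (hann x y m) α
  have step1 : ∀ y (m : M₁ × M₂), g y m ^ (1 + ρ) ≤
      ((Finset.univ.filter fun x' => 0 < P x' y * Q x' y m).card : ℝ) ^ ρ *
        ∑ x, P x y * Q x y m := by
    intro y m
    set L := Finset.univ.filter fun x' => 0 < P x' y * Q x' y m with hL
    have hzero : ∀ x ∈ Finset.univ, x ∉ L → (P x y * Q x y m) ^ α = 0 := by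
      intro x _ hx
      have : ¬ 0 < P x y * Q x y m := by simpa [hL] using hx
      rw [le_antisymm (not_lt.mp this) (hann x y m), Real.zero_rpow hα0.ne']
    have hsum_eq : g y m = ∑ x ∈ L, (P x y * Q x y m) ^ α :=
      (Finset.sum_subset (Finset.filter_subset _ _) hzero).symm
    have hzero2 : ∀ x ∈ Finset.univ, x ∉ L → P x y * Q x y m = 0 := by
      intro x _ hx
      have : ¬ 0 < P x y * Q x y m := by simpa [hL] using hx
      exact le_antisymm (not_lt.mp this) (hann x y m)
    have hsum_eq2 : ∑ x ∈ L, P x y * Q x y m = ∑ x, P x y * Q x y m :=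
      Finset.sum_subset (Finset.filter_subset _ _) hzero2
    have h := sum_rpow_le_card_rpow_mul L (fun x => (P x y * Q x y m) ^ α)
      (fun x _ => Real.rpow_nonneg (hann x y m) α) (p := 1 + ρ) (by linarith)
    have hpow : ∀ x, ((P x y * Q x y m) ^ α) ^ (1 + ρ) = P x y * Q x y m := by
      intro x
      rw [← Real.rpow_mul (hann x y m), hαmul, Real.rpow_one]
    simp only [hpow] at h
    rw [hsum_eq2, show (1 + ρ) - 1 = ρ by ring] at h
    rw [hsum_eq]
    exact h
  set K : ℝ := (Fintype.card (M₁ × M₂) : ℝ) with hK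
  have hK0 : (0:ℝ) < K := by
    rw [hK]; exact_mod_cast Fintype.card_pos
  set Sy : 𝒴 → ℝ := fun y => ∑ x, P x y ^ α with hSy
  have hSynn : ∀ y, 0 ≤ Sy y := fun y =>
    Finset.sum_nonneg fun x _ => Real.rpow_nonneg (hPnn x y) α
  have step2 : ∀ y, K ^ (-ρ) * Sy y ^ (1 + ρ) ≤ ∑ m : M₁ × M₂, g y m ^ (1 + ρ) := by
    intro y
    have hQα : ∀ x, 1 ≤ ∑ m : M₁ × M₂, Q x y m ^ α := by
      intro x
      rw [← hQsum x y]
      refine Finset.sum_le_sum fun m _ => ?_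
      rcases eq_or_lt_of_le (hQnn x y m) with h0 | h0
      · rw [← h0, Real.zero_rpow hα0.ne']
      · have hle1 : Q x y m ≤ 1 := by
          rw [← hQsum x y]
          exact Finset.single_le_sum (fun m _ => hQnn x y m) (Finset.mem_univ m)
        calc Q x y m = Q x y m ^ (1:ℝ) := (Real.rpow_one _).symm
          _ ≤ Q x y m ^ α := Real.rpow_le_rpow_of_exponent_ge h0 hle1 hα1.le
    have hsum_g : Sy y ≤ ∑ m : M₁ × M₂, g y m := by
      have hgeq : ∀ m : M₁ × M₂, g y m = ∑ x, P x y ^ α * Q x y m ^ α :=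
        fun m => Finset.sum_congr rfl fun x _ =>
          Real.mul_rpow (hPnn x y) (hQnn x y m)
      calc Sy y = ∑ x, P x y ^ α * 1 := by simp [hSy]
        _ ≤ ∑ x, P x y ^ α * ∑ m : M₁ × M₂, Q x y m ^ α :=
            Finset.sum_le_sum fun x _ => mul_le_mul_of_nonneg_left (hQα x)
              (Real.rpow_nonneg (hPnn x y) α)
        _ = ∑ m : M₁ × M₂, g y m := by
            simp only [Finset.mul_sum]
            rw [Finset.sum_comm]
            exact Finset.sum_congr rfl fun m _ => (hgeq m).symm
    have h := sum_rpow_le_card_rpow_mul Finset.univ (g y)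
      (fun m _ => hgnn y m) (p := 1 + ρ) (by linarith)
    rw [Finset.card_univ, show (1 + ρ) - 1 = ρ by ring] at h
    have h2 : Sy y ^ (1 + ρ) ≤ K ^ ρ * ∑ m : M₁ × M₂, g y m ^ (1 + ρ) :=
      le_trans (Real.rpow_le_rpow (hSynn y) hsum_g h1ρ.le) h
    calc K ^ (-ρ) * Sy y ^ (1 + ρ)
        ≤ K ^ (-ρ) * (K ^ ρ * ∑ m : M₁ × M₂, g y m ^ (1 + ρ)) :=
          mul_le_mul_of_nonneg_left h2 (Real.rpow_nonneg hK0.le _)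
      _ = ∑ m : M₁ × M₂, g y m ^ (1 + ρ) := by
          rw [← mul_assoc, ← Real.rpow_add hK0, neg_add_cancel, Real.rpow_zero, one_mul]
  -- combine
  have hmain : K ^ (-ρ) * ∑ y, Sy y ^ (1 + ρ) ≤ bobListAmb ρ P Q := by
    rw [hre, Finset.mul_sum]
    refine le_trans (Finset.sum_le_sum fun y _ => step2 y)
      (Finset.sum_le_sum fun y _ => Finset.sum_le_sum fun m _ => ?_)
    rw [mul_comm]
    exact step1 y m
  -- positivity of S
  have hex : ∃ x y, 0 < P x y := by
    by_contra h
    push_neg at h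
    have hz : ∑ x, ∑ y, P x y = 0 :=
      Finset.sum_eq_zero fun x _ => Finset.sum_eq_zero fun y _ =>
        le_antisymm (h x y) (hPnn x y)
    rw [hPsum] at hz
    exact one_ne_zero hz
  obtain ⟨x0, y0, hx0⟩ := hex
  have hSy0 : 0 < Sy y0 :=
    lt_of_lt_of_le (Real.rpow_pos_of_pos hx0 α)
      (Finset.single_le_sum (fun x _ => Real.rpow_nonneg (hPnn x y0) α)
        (Finset.mem_univ x0))
  have hS : 0 < ∑ y, Sy y ^ (1 + ρ) :=
    lt_of_lt_of_le (Real.rpow_pos_of_pos hSy0 (1 + ρ))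
      (Finset.single_le_sum (fun y _ => Real.rpow_nonneg (hSynn y) _)
        (Finset.mem_univ y0))
  -- identify the exponential with K^(-ρ) * S
  have hKcast : ((Fintype.card M₁ : ℝ) * Fintype.card M₂) = K := by
    rw [hK, Fintype.card_prod]; push_cast; ring
  have hrat : α / (1 - α) = 1 / ρ := by
    rw [hα]
    rw [show (1:ℝ) - 1 / (1 + ρ) = ρ / (1 + ρ) by field_simp; ring]
    field_simp
  have h1α : 1 / α = 1 + ρ := by rw [hα, one_div_one_div]
  have hcond : condRenyi (1 / (1 + ρ)) P = (1 / ρ) * Real.logb 2 (∑ y, Sy y ^ (1 + ρ)) := by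
    unfold condRenyi
    rw [← hα, hrat, h1α]
  have hexp : ρ * (condRenyi (1 / (1 + ρ)) P
      - Real.logb 2 ((Fintype.card M₁ : ℝ) * Fintype.card M₂))
      = Real.logb 2 (∑ y, Sy y ^ (1 + ρ)) - ρ * Real.logb 2 K := by
    rw [hcond, hKcast]
    field_simp
  have hval : (2:ℝ) ^ (ρ * (condRenyi (1 / (1 + ρ)) P
      - Real.logb 2 ((Fintype.card M₁ : ℝ) * Fintype.card M₂)))
      = K ^ (-ρ) * ∑ y, Sy y ^ (1 + ρ) := by
    rw [hexp, Real.rpow_sub two_pos, Real.rpow_logb two_pos (by norm_num) hS,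
      mul_comm ρ (Real.logb 2 K), Real.rpow_mul (by norm_num : (0:ℝ) ≤ 2),
      Real.rpow_logb two_pos (by norm_num) hK0, Real.rpow_neg hK0.le,
      div_eq_mul_inv, mul_comm]
  refine max_le ?_ hone
  rw [hval]
  exact hmain
end
end

section
/- For every stochastic encoder Q with hint sets ℳ₁, ℳ₂, Eve's ambiguity is upper-bounded by A_E(Q) ≤ min( min(|ℳ₁|,|ℳ₂|)^ρ · A_B^l(Q), 2^{ρ·H_ᾱ(X|Y)} ). -/
open Real Finset Filter
open scoped Classical

noncomputable section

lemma exists_rank {𝒳 : Type*} [Fintype 𝒳] {κ : Type*} [LinearOrder κ] (k : 𝒳 → κ) :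
    ∃ G : 𝒳 → ℕ, Function.Injective G ∧ (∀ x, G x ∈ Finset.Icc 1 (Fintype.card 𝒳)) ∧
      ∀ x, G x ≤ (Finset.univ.filter fun x' => k x' ≤ k x).card := by
  classical
  let ι := Fintype.equivFin 𝒳
  let r : 𝒳 → κ ×ₗ ℕ := fun x => toLex (k x, (ι x : ℕ))
  have hr : Function.Injective r := by
    intro a b hab
    have h2 : ((ι a : ℕ)) = (ι b : ℕ) := congrArg (fun p => (ofLex p).2) hab
    exact ι.injective (Fin.ext h2)
  refine ⟨fun x => (Finset.univ.filter fun x' => r x' ≤ r x).card, ?_, ?_, ?_⟩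
  · have key : ∀ a b : 𝒳, r a < r b →
        (Finset.univ.filter fun x' => r x' ≤ r a).card <
        (Finset.univ.filter fun x' => r x' ≤ r b).card := by
      intro a b hab
      apply Finset.card_lt_card
      rw [Finset.ssubset_iff_of_subset]
      · exact ⟨b, by simp, by simp [not_le.mpr hab]⟩
      · intro x hx
        simp only [Finset.mem_filter, Finset.mem_univ, true_and] at hx ⊢
        exact hx.trans hab.le
    intro a b hab
    by_contra hne
    rcases (hr.ne hne).lt_or_gt with h | h
    · exact absurd hab (key a b h).ne
    · exact absurd hab.symm (key b a h).ne
  · intro x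
    rw [Finset.mem_Icc]
    refine ⟨Finset.card_pos.mpr ⟨x, by simp⟩, ?_⟩
    exact (Finset.card_filter_le _ _).trans (le_of_eq (Finset.card_univ))
  · intro x
    apply Finset.card_le_card
    intro x' hx'
    simp only [Finset.mem_filter, Finset.mem_univ, true_and] at hx' ⊢
    rcases (Prod.Lex.le_iff).mp hx' with h | h
    · exact h.le
    · exact h.1.le

lemma eveAmb_le {𝒳 𝒴 M₁ M₂ : Type*} [Fintype 𝒳] [Fintype 𝒴] [Fintype M₁] [Fintype M₂]
    (ρ : ℝ) (P : 𝒳 → 𝒴 → ℝ) (Q : 𝒳 → 𝒴 → M₁ × M₂ → ℝ)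
    (hP0 : ∀ x y, 0 ≤ P x y) (hQ0 : ∀ x y m, 0 ≤ Q x y m)
    (G₁ : 𝒳 → 𝒴 × M₁ → ℕ) (G₂ : 𝒳 → 𝒴 × M₂ → ℕ)
    (h₁ : IsGuessing G₁) (h₂ : IsGuessing G₂) :
    eveAmb ρ P Q ≤ ∑ x, ∑ y, ∑ m : M₁ × M₂, P x y * Q x y m *
      ((min (G₁ x (y, m.1)) (G₂ x (y, m.2)) : ℕ) : ℝ) ^ ρ := by
  apply csInf_le
  · refine ⟨0, ?_⟩
    rintro e ⟨H₁, H₂, _, _, rfl⟩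
    refine Finset.sum_nonneg fun x _ => Finset.sum_nonneg fun y _ =>
      Finset.sum_nonneg fun m _ => ?_
    exact mul_nonneg (mul_nonneg (hP0 x y) (hQ0 x y m))
      (Real.rpow_nonneg (Nat.cast_nonneg _) _)
  · exact ⟨G₁, G₂, h₁, h₂, rfl⟩

lemma renyi_bound {𝒳 𝒴 M₁ M₂ : Type*} [Fintype 𝒳] [Fintype 𝒴] [Fintype M₁] [Fintype M₂]
    (ρ : ℝ) (hρ : 0 < ρ) (P : 𝒳 → 𝒴 → ℝ) (hP : IsPMF P)
    (Q : 𝒳 → 𝒴 → M₁ × M₂ → ℝ) (hQ : IsCondPMF Q) :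
    eveAmb ρ P Q ≤ 2 ^ (ρ * condRenyi (1 / (1 + ρ)) P) := by
  have h1ρ : (0:ℝ) < 1 + ρ := by linarith
  have hα1' : 1 - (1 / (1 + ρ)) * ρ = 1 / (1 + ρ) := by field_simp; ring
  set α : ℝ := 1 / (1 + ρ) with hαdef
  have hα : 0 < α := by positivity
  have hα1 : 1 - α * ρ = α := hα1'
  set S : 𝒴 → ℝ := fun y => ∑ x, P x y ^ α with hSdef
  have hS0 : ∀ y, 0 ≤ S y := fun y =>
    Finset.sum_nonneg fun x _ => Real.rpow_nonneg (hP.1 x y) _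
  -- choose optimal guessing per y
  have h : ∀ y : 𝒴, ∃ G : 𝒳 → ℕ, Function.Injective G ∧
      (∀ x, G x ∈ Finset.Icc 1 (Fintype.card 𝒳)) ∧
      ∀ x, G x ≤ (Finset.univ.filter fun x' => P x y ≤ P x' y).card := fun y =>
    exists_rank (fun x => OrderDual.toDual (P x y))
  choose G hGinj hGmem hGle using h
  have key := eveAmb_le ρ P Q hP.1 (fun x y m => (hQ x y).1 m)
    (fun x w => G w.1 x) (fun x w => G w.1 x)
    (fun w => ⟨hGinj w.1, hGmem w.1⟩) (fun w => ⟨hGinj w.1, hGmem w.1⟩)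
  simp only [min_self] at key
  refine key.trans ?_
  -- collapse the sum over m
  have step1 : ∑ x, ∑ y, ∑ m : M₁ × M₂, P x y * Q x y m * ((G y x : ℕ) : ℝ) ^ ρ
      = ∑ y, ∑ x, P x y * ((G y x : ℕ) : ℝ) ^ ρ := by
    rw [Finset.sum_comm]
    refine Finset.sum_congr rfl fun y _ => Finset.sum_congr rfl fun x _ => ?_
    calc ∑ m : M₁ × M₂, P x y * Q x y m * ((G y x : ℕ) : ℝ) ^ ρ
        = (∑ m : M₁ × M₂, Q x y m) * (P x y * ((G y x : ℕ) : ℝ) ^ ρ) := by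
          rw [Finset.sum_mul]; exact Finset.sum_congr rfl fun m _ => by ring
      _ = P x y * ((G y x : ℕ) : ℝ) ^ ρ := by rw [(hQ x y).2, one_mul]
  rw [step1]
  -- per-y bound
  have step2 : ∀ y, ∑ x, P x y * ((G y x : ℕ) : ℝ) ^ ρ ≤ S y ^ (1 + ρ) := by
    intro y
    rcases eq_or_lt_of_le (hS0 y) with hS | hSpos
    · have hzero : ∀ x, P x y = 0 := by
        intro x
        have := (Finset.sum_eq_zero_iff_of_nonneg
          (fun x _ => Real.rpow_nonneg (hP.1 x y) α)).mp hS.symm x (Finset.mem_univ x)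
        have := (Real.rpow_eq_zero_iff_of_nonneg (hP.1 x y)).mp this
        exact this.1
      rw [← hS, Real.zero_rpow (by linarith)]
      refine le_of_eq (Finset.sum_eq_zero fun x _ => by rw [hzero x, zero_mul])
    · have hterm : ∀ x, P x y * ((G y x : ℕ) : ℝ) ^ ρ ≤ P x y ^ α * S y ^ ρ := by
        intro x
        rcases eq_or_lt_of_le (hP.1 x y) with hx | hx
        · rw [← hx, zero_mul]
          exact mul_nonneg (Real.rpow_nonneg le_rfl _) (Real.rpow_nonneg (hS0 y) _)
        · have hcard : ((Finset.univ.filter fun x' => P x y ≤ P x' y).card : ℝ)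
              * P x y ^ α ≤ S y := by
            have h1 : ∀ x' ∈ Finset.univ.filter fun x' => P x y ≤ P x' y,
                P x y ^ α ≤ P x' y ^ α := fun x' hx' => by
              refine Real.rpow_le_rpow hx.le ?_ hα.le
              exact (Finset.mem_filter.mp hx').2
            calc ((Finset.univ.filter fun x' => P x y ≤ P x' y).card : ℝ) * P x y ^ α
                = (Finset.univ.filter fun x' => P x y ≤ P x' y).card • (P x y ^ α) := by
                  rw [nsmul_eq_mul]
              _ ≤ ∑ x' ∈ Finset.univ.filter fun x' => P x y ≤ P x' y, P x' y ^ α :=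
                  Finset.card_nsmul_le_sum _ _ _ h1
              _ ≤ S y := Finset.sum_le_sum_of_subset_of_nonneg (Finset.filter_subset _ _)
                  (fun i _ _ => Real.rpow_nonneg (hP.1 i y) _)
          have hPα : (0:ℝ) < P x y ^ α := Real.rpow_pos_of_pos hx α
          have hG : ((G y x : ℕ) : ℝ) ≤ S y * P x y ^ (-α) := by
            have h2 : ((G y x : ℕ) : ℝ)
                ≤ ((Finset.univ.filter fun x' => P x y ≤ P x' y).card : ℝ) :=
              Nat.cast_le.mpr (hGle y x)
            rw [Real.rpow_neg hx.le]
            have h3 := (le_div_iff₀ hPα).mpr hcard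
            rw [div_eq_mul_inv] at h3
            exact h2.trans h3
          have hGρ : ((G y x : ℕ) : ℝ) ^ ρ ≤ S y ^ ρ * P x y ^ (-α * ρ) := by
            calc ((G y x : ℕ) : ℝ) ^ ρ ≤ (S y * P x y ^ (-α)) ^ ρ :=
                Real.rpow_le_rpow (Nat.cast_nonneg _) hG hρ.le
              _ = S y ^ ρ * P x y ^ (-α * ρ) := by
                rw [Real.mul_rpow (hS0 y) (Real.rpow_nonneg hx.le _),
                  ← Real.rpow_mul hx.le]
          calc P x y * ((G y x : ℕ) : ℝ) ^ ρ
              ≤ P x y * (S y ^ ρ * P x y ^ (-α * ρ)) :=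
                mul_le_mul_of_nonneg_left hGρ hx.le
            _ = P x y ^ (1 + (-α * ρ)) * S y ^ ρ := by
                rw [Real.rpow_add hx, Real.rpow_one]; ring
            _ = P x y ^ α * S y ^ ρ := by rw [show 1 + (-α * ρ) = α by linarith [hα1]]
      calc ∑ x, P x y * ((G y x : ℕ) : ℝ) ^ ρ ≤ ∑ x, P x y ^ α * S y ^ ρ :=
            Finset.sum_le_sum fun x _ => hterm x
        _ = S y * S y ^ ρ := by rw [← Finset.sum_mul]
        _ = S y ^ (1 + ρ) := by rw [Real.rpow_add hSpos, Real.rpow_one]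
  refine (Finset.sum_le_sum fun y _ => step2 y).trans ?_
  -- identify with the entropy expression
  have hT : 0 < ∑ y, S y ^ (1 + ρ) := by
    obtain ⟨x₀, y₀, hxy⟩ : ∃ x y, 0 < P x y := by
      by_contra hc
      push_neg at hc
      have : ∑ x, ∑ y, P x y = 0 := Finset.sum_eq_zero fun x _ =>
        Finset.sum_eq_zero fun y _ => le_antisymm (hc x y) (hP.1 x y)
      rw [hP.2] at this; norm_num at this
    refine Finset.sum_pos' (fun y _ => Real.rpow_nonneg (hS0 y) _) ⟨y₀, Finset.mem_univ _, ?_⟩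
    have : 0 < S y₀ := by
      refine Finset.sum_pos' (fun x _ => Real.rpow_nonneg (hP.1 x y₀) _)
        ⟨x₀, Finset.mem_univ _, Real.rpow_pos_of_pos hxy _⟩
    exact Real.rpow_pos_of_pos this _
  have hinv : 1 / α = 1 + ρ := by rw [hαdef]; field_simp
  have hcoef : ρ * (α / (1 - α)) = 1 := by
    rw [hαdef]; field_simp
    rw [add_sub_cancel_left, div_self hρ.ne']
  rw [condRenyi, hinv, ← mul_assoc, hcoef, one_mul]
  rw [Real.rpow_logb (by norm_num) (by norm_num) hT]

lemma list_bound₁ {𝒳 𝒴 M₁ M₂ : Type*} [Fintype 𝒳] [Fintype 𝒴] [Fintype M₁] [Fintype M₂]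
    (ρ : ℝ) (hρ : 0 < ρ) (P : 𝒳 → 𝒴 → ℝ) (hP : IsPMF P)
    (Q : 𝒳 → 𝒴 → M₁ × M₂ → ℝ) (hQ : IsCondPMF Q) :
    eveAmb ρ P Q ≤ (Fintype.card M₁ : ℝ) ^ ρ * bobListAmb ρ P Q := by
  classical
  set L : 𝒴 → M₁ × M₂ → Finset 𝒳 :=
    fun y m => Finset.univ.filter fun x' => 0 < P x' y * Q x' y m with hL
  set kk : 𝒴 × M₂ → 𝒳 → ℕ∞ := fun w x =>
    (Finset.univ.filter fun m₁ => 0 < P x w.1 * Q x w.1 (m₁, w.2)).inf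
      fun m₁ => ((L w.1 (m₁, w.2)).card : ℕ∞) with hkk
  have h : ∀ w : 𝒴 × M₂, ∃ G : 𝒳 → ℕ, Function.Injective G ∧
      (∀ x, G x ∈ Finset.Icc 1 (Fintype.card 𝒳)) ∧
      ∀ x, G x ≤ (Finset.univ.filter fun x' => kk w x' ≤ kk w x).card := fun w =>
    exists_rank (kk w)
  choose G hGinj hGmem hGle using h
  obtain ⟨G0, hG0inj, hG0mem, -⟩ := exists_rank (fun _ : 𝒳 => (0 : ℕ))
  have claim : ∀ y (m : M₁ × M₂) x, 0 < P x y * Q x y m →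
      G (y, m.2) x ≤ Fintype.card M₁ * (L y m).card := by
    intro y m x hpos
    have hkx : kk (y, m.2) x ≤ ((L y m).card : ℕ∞) := by
      have hmem : m.1 ∈ Finset.univ.filter
          fun m₁ => 0 < P x y * Q x y (m₁, m.2) := by
        simp only [Finset.mem_filter, Finset.mem_univ, true_and]
        rw [Prod.mk.eta]; exact hpos
      have := Finset.inf_le (f := fun m₁ => ((L y (m₁, m.2)).card : ℕ∞)) hmem
      have heta : (m.1, m.2) = m := rfl
      simp only [heta] at this
      exact this
    refine (hGle (y, m.2) x).trans ?_
    have hsub : (Finset.univ.filter fun x' => kk (y, m.2) x' ≤ kk (y, m.2) x) ⊆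
        (Finset.univ.filter fun m₁' => (L y (m₁', m.2)).card ≤ (L y m).card).biUnion
          fun m₁' => L y (m₁', m.2) := by
      intro x' hx'
      have hx'k : kk (y, m.2) x' ≤ ((L y m).card : ℕ∞) :=
        le_trans (Finset.mem_filter.mp hx').2 hkx
      have hlt : (((L y m).card : ℕ∞)) < ⊤ := by
        exact_mod_cast WithTop.coe_lt_top ((L y m).card)
      obtain ⟨m₁', hm₁'mem, hle⟩ := (Finset.inf_le_iff hlt).mp hx'k
      refine Finset.mem_biUnion.mpr ⟨m₁', ?_, ?_⟩
      · simp only [Finset.mem_filter, Finset.mem_univ, true_and]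
        exact_mod_cast hle
      · simp only [hL, Finset.mem_filter, Finset.mem_univ, true_and]
        exact (Finset.mem_filter.mp hm₁'mem).2
    calc (Finset.univ.filter fun x' => kk (y, m.2) x' ≤ kk (y, m.2) x).card
        ≤ ((Finset.univ.filter fun m₁' => (L y (m₁', m.2)).card ≤ (L y m).card).biUnion
          fun m₁' => L y (m₁', m.2)).card := Finset.card_le_card hsub
      _ ≤ ∑ m₁' ∈ Finset.univ.filter
            fun m₁' => (L y (m₁', m.2)).card ≤ (L y m).card, (L y (m₁', m.2)).card :=
          Finset.card_biUnion_le
      _ ≤ (Finset.univ.filter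
            fun m₁' => (L y (m₁', m.2)).card ≤ (L y m).card).card • (L y m).card :=
          Finset.sum_le_card_nsmul _ _ _ fun i hi => (Finset.mem_filter.mp hi).2
      _ ≤ Fintype.card M₁ * (L y m).card := by
          rw [smul_eq_mul]
          exact Nat.mul_le_mul_right _ ((Finset.card_filter_le _ _).trans
            (le_of_eq Finset.card_univ))
  refine (eveAmb_le ρ P Q hP.1 (fun x y m => (hQ x y).1 m)
    (fun x _ => G0 x) (fun x w => G w x)
    (fun w => ⟨hG0inj, hG0mem⟩) (fun w => ⟨hGinj w, hGmem w⟩)).trans ?_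
  calc ∑ x, ∑ y, ∑ m : M₁ × M₂, P x y * Q x y m *
        ((min (G0 x) (G (y, m.2) x) : ℕ) : ℝ) ^ ρ
      ≤ ∑ x, ∑ y, ∑ m : M₁ × M₂, (Fintype.card M₁ : ℝ) ^ ρ *
        (P x y * Q x y m * ((L y m).card : ℝ) ^ ρ) := by
        refine Finset.sum_le_sum fun x _ => Finset.sum_le_sum fun y _ =>
          Finset.sum_le_sum fun m _ => ?_
        rcases eq_or_lt_of_le (mul_nonneg (hP.1 x y) ((hQ x y).1 m)) with hpq | hpq
        · rw [← hpq, zero_mul]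
          positivity
        · have h1 : ((min (G0 x) (G (y, m.2) x) : ℕ) : ℝ) ≤
              ((Fintype.card M₁ * (L y m).card : ℕ) : ℝ) :=
            Nat.cast_le.mpr ((min_le_right _ _).trans (claim y m x hpq))
          have h2 : ((min (G0 x) (G (y, m.2) x) : ℕ) : ℝ) ^ ρ ≤
              (Fintype.card M₁ : ℝ) ^ ρ * ((L y m).card : ℝ) ^ ρ := by
            calc ((min (G0 x) (G (y, m.2) x) : ℕ) : ℝ) ^ ρ
                ≤ ((Fintype.card M₁ * (L y m).card : ℕ) : ℝ) ^ ρ :=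
                  Real.rpow_le_rpow (Nat.cast_nonneg _) h1 hρ.le
              _ = (Fintype.card M₁ : ℝ) ^ ρ * ((L y m).card : ℝ) ^ ρ := by
                  push_cast
                  exact Real.mul_rpow (Nat.cast_nonneg _) (Nat.cast_nonneg _)
          calc P x y * Q x y m * ((min (G0 x) (G (y, m.2) x) : ℕ) : ℝ) ^ ρ
              ≤ P x y * Q x y m *
                ((Fintype.card M₁ : ℝ) ^ ρ * ((L y m).card : ℝ) ^ ρ) :=
                mul_le_mul_of_nonneg_left h2 hpq.le
            _ = (Fintype.card M₁ : ℝ) ^ ρ *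
                (P x y * Q x y m * ((L y m).card : ℝ) ^ ρ) := by ring
    _ = (Fintype.card M₁ : ℝ) ^ ρ * bobListAmb ρ P Q := by
        rw [bobListAmb]
        simp only [hL, Finset.mul_sum]

lemma list_bound₂ {𝒳 𝒴 M₁ M₂ : Type*} [Fintype 𝒳] [Fintype 𝒴] [Fintype M₁] [Fintype M₂]
    (ρ : ℝ) (hρ : 0 < ρ) (P : 𝒳 → 𝒴 → ℝ) (hP : IsPMF P)
    (Q : 𝒳 → 𝒴 → M₁ × M₂ → ℝ) (hQ : IsCondPMF Q) :
    eveAmb ρ P Q ≤ (Fintype.card M₂ : ℝ) ^ ρ * bobListAmb ρ P Q := by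
  classical
  set L : 𝒴 → M₁ × M₂ → Finset 𝒳 :=
    fun y m => Finset.univ.filter fun x' => 0 < P x' y * Q x' y m with hL
  set kk : 𝒴 × M₁ → 𝒳 → ℕ∞ := fun w x =>
    (Finset.univ.filter fun m₂ => 0 < P x w.1 * Q x w.1 (w.2, m₂)).inf
      fun m₂ => ((L w.1 (w.2, m₂)).card : ℕ∞) with hkk
  have h : ∀ w : 𝒴 × M₁, ∃ G : 𝒳 → ℕ, Function.Injective G ∧
      (∀ x, G x ∈ Finset.Icc 1 (Fintype.card 𝒳)) ∧
      ∀ x, G x ≤ (Finset.univ.filter fun x' => kk w x' ≤ kk w x).card := fun w =>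
    exists_rank (kk w)
  choose G hGinj hGmem hGle using h
  obtain ⟨G0, hG0inj, hG0mem, -⟩ := exists_rank (fun _ : 𝒳 => (0 : ℕ))
  have claim : ∀ y (m : M₁ × M₂) x, 0 < P x y * Q x y m →
      G (y, m.1) x ≤ Fintype.card M₂ * (L y m).card := by
    intro y m x hpos
    have hkx : kk (y, m.1) x ≤ ((L y m).card : ℕ∞) := by
      have hmem : m.2 ∈ Finset.univ.filter
          fun m₂ => 0 < P x y * Q x y (m.1, m₂) := by
        simp only [Finset.mem_filter, Finset.mem_univ, true_and]
        rw [Prod.mk.eta]; exact hpos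
      have := Finset.inf_le (f := fun m₂ => ((L y (m.1, m₂)).card : ℕ∞)) hmem
      have heta : (m.1, m.2) = m := rfl
      simp only [heta] at this
      exact this
    refine (hGle (y, m.1) x).trans ?_
    have hsub : (Finset.univ.filter fun x' => kk (y, m.1) x' ≤ kk (y, m.1) x) ⊆
        (Finset.univ.filter fun m₂' => (L y (m.1, m₂')).card ≤ (L y m).card).biUnion
          fun m₂' => L y (m.1, m₂') := by
      intro x' hx'
      have hx'k : kk (y, m.1) x' ≤ ((L y m).card : ℕ∞) :=
        le_trans (Finset.mem_filter.mp hx').2 hkx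
      have hlt : (((L y m).card : ℕ∞)) < ⊤ := by
        exact_mod_cast WithTop.coe_lt_top ((L y m).card)
      obtain ⟨m₂', hm₂'mem, hle⟩ := (Finset.inf_le_iff hlt).mp hx'k
      refine Finset.mem_biUnion.mpr ⟨m₂', ?_, ?_⟩
      · simp only [Finset.mem_filter, Finset.mem_univ, true_and]
        exact_mod_cast hle
      · simp only [hL, Finset.mem_filter, Finset.mem_univ, true_and]
        exact (Finset.mem_filter.mp hm₂'mem).2
    calc (Finset.univ.filter fun x' => kk (y, m.1) x' ≤ kk (y, m.1) x).card
        ≤ ((Finset.univ.filter fun m₂' => (L y (m.1, m₂')).card ≤ (L y m).card).biUnion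
          fun m₂' => L y (m.1, m₂')).card := Finset.card_le_card hsub
      _ ≤ ∑ m₂' ∈ Finset.univ.filter
            fun m₂' => (L y (m.1, m₂')).card ≤ (L y m).card, (L y (m.1, m₂')).card :=
          Finset.card_biUnion_le
      _ ≤ (Finset.univ.filter
            fun m₂' => (L y (m.1, m₂')).card ≤ (L y m).card).card • (L y m).card :=
          Finset.sum_le_card_nsmul _ _ _ fun i hi => (Finset.mem_filter.mp hi).2
      _ ≤ Fintype.card M₂ * (L y m).card := by
          rw [smul_eq_mul]
          exact Nat.mul_le_mul_right _ ((Finset.card_filter_le _ _).trans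
            (le_of_eq Finset.card_univ))
  refine (eveAmb_le ρ P Q hP.1 (fun x y m => (hQ x y).1 m)
    (fun x w => G w x) (fun x _ => G0 x)
    (fun w => ⟨hGinj w, hGmem w⟩) (fun w => ⟨hG0inj, hG0mem⟩)).trans ?_
  calc ∑ x, ∑ y, ∑ m : M₁ × M₂, P x y * Q x y m *
        ((min (G (y, m.1) x) (G0 x) : ℕ) : ℝ) ^ ρ
      ≤ ∑ x, ∑ y, ∑ m : M₁ × M₂, (Fintype.card M₂ : ℝ) ^ ρ *
        (P x y * Q x y m * ((L y m).card : ℝ) ^ ρ) := by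
        refine Finset.sum_le_sum fun x _ => Finset.sum_le_sum fun y _ =>
          Finset.sum_le_sum fun m _ => ?_
        rcases eq_or_lt_of_le (mul_nonneg (hP.1 x y) ((hQ x y).1 m)) with hpq | hpq
        · rw [← hpq, zero_mul]
          positivity
        · have h1 : ((min (G (y, m.1) x) (G0 x) : ℕ) : ℝ) ≤
              ((Fintype.card M₂ * (L y m).card : ℕ) : ℝ) :=
            Nat.cast_le.mpr ((min_le_left _ _).trans (claim y m x hpq))
          have h2 : ((min (G (y, m.1) x) (G0 x) : ℕ) : ℝ) ^ ρ ≤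
              (Fintype.card M₂ : ℝ) ^ ρ * ((L y m).card : ℝ) ^ ρ := by
            calc ((min (G (y, m.1) x) (G0 x) : ℕ) : ℝ) ^ ρ
                ≤ ((Fintype.card M₂ * (L y m).card : ℕ) : ℝ) ^ ρ :=
                  Real.rpow_le_rpow (Nat.cast_nonneg _) h1 hρ.le
              _ = (Fintype.card M₂ : ℝ) ^ ρ * ((L y m).card : ℝ) ^ ρ := by
                  push_cast
                  exact Real.mul_rpow (Nat.cast_nonneg _) (Nat.cast_nonneg _)
          calc P x y * Q x y m * ((min (G (y, m.1) x) (G0 x) : ℕ) : ℝ) ^ ρ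
              ≤ P x y * Q x y m *
                ((Fintype.card M₂ : ℝ) ^ ρ * ((L y m).card : ℝ) ^ ρ) :=
                mul_le_mul_of_nonneg_left h2 hpq.le
            _ = (Fintype.card M₂ : ℝ) ^ ρ *
                (P x y * Q x y m * ((L y m).card : ℝ) ^ ρ) := by ring
    _ = (Fintype.card M₂ : ℝ) ^ ρ * bobListAmb ρ P Q := by
        rw [bobListAmb]
        simp only [hL, Finset.mul_sum]


theorem finite_blocklength_list_converse_eve
    {𝒳 𝒴 M₁ M₂ : Type*} [Fintype 𝒳] [Fintype 𝒴] [Fintype M₁] [Fintype M₂]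
    [Nonempty 𝒳] [Nonempty 𝒴] [Nonempty M₁] [Nonempty M₂]
    (ρ : ℝ) (hρ : 0 < ρ) (P : 𝒳 → 𝒴 → ℝ) (hP : IsPMF P)
    (Q : 𝒳 → 𝒴 → M₁ × M₂ → ℝ) (hQ : IsCondPMF Q) :
    eveAmb ρ P Q ≤
      min ((min (Fintype.card M₁) (Fintype.card M₂) : ℝ) ^ ρ * bobListAmb ρ P Q)
        (2 ^ (ρ * condRenyi (1 / (1 + ρ)) P)) := by
  refine le_min ?_ (renyi_bound ρ hρ P hP Q hQ)
  rcases le_total (Fintype.card M₁) (Fintype.card M₂) with h | h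
  · rw [min_eq_left (Nat.cast_le.mpr h : ((Fintype.card M₁ : ℝ)) ≤ _)]
    exact list_bound₁ ρ hρ P hP Q hQ
  · rw [min_eq_right (Nat.cast_le.mpr h : ((Fintype.card M₂ : ℝ)) ≤ _)]
    exact list_bound₂ ρ hρ P hP Q hQ
end
end

section
/- (Asymptotic infeasibility.) Suppose the conditional Rényi entropy-rate H := lim_{n→∞} H_ᾱ(X^n|Y^n)/n exists and let R₁, R₂ > 0 satisfy R₁ + R₂ < H. Then for every sequence (Q_n) of stochastic encoders, where Q_n has hint sets ℳ₁⁽ⁿ⁾ of size ⌈2^{nR₁}⌉ and ℳ₂⁽ⁿ⁾ of size ⌈2^{nR₂}⌉, Bob's guessing ambiguity cannot tend to 1: in fact liminf_{n→∞} (1/n) log A_B^g(Q_n) ≥ ρ(H − R₁ − R₂) > 0. -/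
open Real Finset Filter
open scoped Classical

noncomputable section

set_option maxHeartbeats 1000000

lemma my_rpow_add_le {x y p : ℝ} (hx : 0 ≤ x) (hy : 0 ≤ y) (hp : 0 ≤ p) (hp1 : p ≤ 1) :
    (x + y) ^ p ≤ x ^ p + y ^ p := by
  have h := NNReal.rpow_add_le_add_rpow x.toNNReal y.toNNReal hp hp1
  have h2 := NNReal.coe_le_coe.mpr h
  rw [← Real.toNNReal_add hx hy] at h2
  push_cast at h2
  rwa [Real.coe_toNNReal _ (add_nonneg hx hy), Real.coe_toNNReal _ hx,
    Real.coe_toNNReal _ hy] at h2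

lemma my_sum_rpow {ι : Type*} (s : Finset ι) (f : ι → ℝ) (hf : ∀ i ∈ s, 0 ≤ f i)
    {p : ℝ} (hp : 0 < p) (hp1 : p ≤ 1) :
    (∑ i ∈ s, f i) ^ p ≤ ∑ i ∈ s, f i ^ p := by
  induction s using Finset.cons_induction with
  | empty => simp [Real.zero_rpow hp.ne']
  | cons a s ha ih =>
    rw [Finset.sum_cons, Finset.sum_cons]
    calc (f a + ∑ i ∈ s, f i) ^ p
        ≤ f a ^ p + (∑ i ∈ s, f i) ^ p :=
          my_rpow_add_le (hf a (Finset.mem_cons_self a s))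
            (Finset.sum_nonneg fun i hi => hf i (Finset.mem_cons_of_mem hi)) hp.le hp1
      _ ≤ f a ^ p + ∑ i ∈ s, f i ^ p := by
          exact add_le_add le_rfl (ih fun i hi => hf i (Finset.mem_cons_of_mem hi))

lemma sum_comp_guess {𝒳 : Type*} [Fintype 𝒳] (g : 𝒳 → ℕ)
    (hg1 : Function.Injective g) (hg2 : ∀ x, g x ∈ Finset.Icc 1 (Fintype.card 𝒳))
    (f : ℕ → ℝ) : ∑ x, f (g x) = ∑ k ∈ Finset.Icc 1 (Fintype.card 𝒳), f k := by
  have himg : Finset.image g Finset.univ = Finset.Icc 1 (Fintype.card 𝒳) := by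
    apply Finset.eq_of_subset_of_card_le
    · intro k hk
      simp only [Finset.mem_image] at hk
      obtain ⟨x, _, rfl⟩ := hk
      exact hg2 x
    · rw [Finset.card_image_of_injective _ hg1, Finset.card_univ, Nat.card_Icc]
      omega
  rw [← himg, Finset.sum_image (fun x _ y _ h => hg1 h)]

lemma holder_guess {𝒳 : Type*} [Fintype 𝒳] [Nonempty 𝒳] {ρ : ℝ} (hρ : 0 < ρ)
    (p : 𝒳 → ℝ) (hp : ∀ x, 0 ≤ p x) (g : 𝒳 → ℕ)
    (hg1 : Function.Injective g) (hg2 : ∀ x, g x ∈ Finset.Icc 1 (Fintype.card 𝒳)) :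
    ∑ x, p x ^ (1/(1+ρ)) ≤
      (∑ x, p x * (g x : ℝ) ^ ρ) ^ (1/(1+ρ)) *
        (∑ k ∈ Finset.Icc 1 (Fintype.card 𝒳), (k : ℝ)⁻¹) ^ (ρ/(1+ρ)) := by
  have hρ1 : (0:ℝ) < 1 + ρ := by linarith
  set c : ℝ := ∑ k ∈ Finset.Icc 1 (Fintype.card 𝒳), (k : ℝ)⁻¹ with hc
  have hgpos : ∀ x, (0:ℝ) < (g x : ℝ) := by
    intro x
    have h1 := (Finset.mem_Icc.mp (hg2 x)).1
    exact_mod_cast Nat.lt_of_lt_of_le Nat.zero_lt_one h1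
  have hcg : ∑ x, ((g x : ℝ))⁻¹ = c := sum_comp_guess g hg1 hg2 (fun k => (k : ℝ)⁻¹)
  have hcpos : 0 < c := by
    rw [← hcg]
    exact Finset.sum_pos (fun x _ => inv_pos.mpr (hgpos x)) Finset.univ_nonempty
  set w : 𝒳 → ℝ := fun x => (g x : ℝ)⁻¹ / c with hw_def
  set z : 𝒳 → ℝ := fun x => (p x * (g x : ℝ) ^ (1+ρ)) ^ (1/(1+ρ)) with hz_def
  have hw : ∀ x ∈ Finset.univ (α := 𝒳), 0 ≤ w x := fun x _ => by positivity
  have hw' : ∑ x, w x = 1 := by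
    rw [hw_def]
    simp only
    rw [← Finset.sum_div, hcg, div_self hcpos.ne']
  have hz : ∀ x ∈ Finset.univ (α := 𝒳), 0 ≤ z x := fun x _ =>
    Real.rpow_nonneg (mul_nonneg (hp x) (Real.rpow_nonneg (hgpos x).le _)) _
  have key := Real.arith_mean_le_rpow_mean Finset.univ w z hw hw' hz
    (p := 1 + ρ) (by linarith)
  have hexp : (1+ρ) * (1/(1+ρ)) = 1 := by field_simp
  have hwz : ∀ x, w x * z x = p x ^ (1/(1+ρ)) / c := by
    intro x
    rw [hz_def]
    simp only
    rw [Real.mul_rpow (hp x) (Real.rpow_nonneg (hgpos x).le _),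
      ← Real.rpow_mul (hgpos x).le, hexp, Real.rpow_one, hw_def]
    have hc0 : c ≠ 0 := hcpos.ne'
    have hg0 : ((g x : ℕ) : ℝ) ≠ 0 := (hgpos x).ne'
    field_simp
  have hwz2 : ∀ x, w x * z x ^ (1+ρ) = p x * (g x : ℝ) ^ ρ / c := by
    intro x
    rw [hz_def]
    simp only
    rw [← Real.rpow_mul (mul_nonneg (hp x) (Real.rpow_nonneg (hgpos x).le _)),
      one_div_mul_cancel hρ1.ne', Real.rpow_one, hw_def]
    simp only
    have : (g x : ℝ) ^ (1+ρ) = (g x : ℝ) * (g x : ℝ) ^ ρ := by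
      rw [Real.rpow_add (hgpos x), Real.rpow_one]
    rw [this]
    have hc0 : c ≠ 0 := hcpos.ne'
    have hg0 : ((g x : ℕ) : ℝ) ≠ 0 := (hgpos x).ne'
    field_simp
  rw [Finset.sum_congr rfl (fun x _ => hwz x), Finset.sum_congr rfl (fun x _ => hwz2 x)] at key
  rw [← Finset.sum_div, ← Finset.sum_div] at key
  have hA : 0 ≤ ∑ x, p x * (g x : ℝ) ^ ρ :=
    Finset.sum_nonneg fun x _ => mul_nonneg (hp x) (Real.rpow_nonneg (hgpos x).le _)
  calc ∑ x, p x ^ (1/(1+ρ)) = c * ((∑ x, p x ^ (1/(1+ρ))) / c) := by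
        field_simp
    _ ≤ c * (((∑ x, p x * (g x : ℝ) ^ ρ) / c) ^ (1/(1+ρ))) :=
        mul_le_mul_of_nonneg_left key hcpos.le
    _ = (∑ x, p x * (g x : ℝ) ^ ρ) ^ (1/(1+ρ)) * c ^ (ρ/(1+ρ)) := by
        rw [Real.div_rpow hA hcpos.le]
        have hcc : c / c ^ (1/(1+ρ)) = c ^ (ρ/(1+ρ)) := by
          nth_rewrite 1 [← Real.rpow_one c]
          rw [← Real.rpow_sub hcpos]
          congr 1
          field_simp
          ring
        calc c * ((∑ x, p x * (g x : ℝ) ^ ρ) ^ (1/(1+ρ)) / c ^ (1/(1+ρ)))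
            = (∑ x, p x * (g x : ℝ) ^ ρ) ^ (1/(1+ρ)) * (c / c ^ (1/(1+ρ))) := by
              ring
          _ = _ := by rw [hcc]
lemma arikan_bound {𝒳 W : Type*} [Fintype 𝒳] [Nonempty 𝒳] [Fintype W] {ρ : ℝ} (hρ : 0 < ρ)
    (p : 𝒳 → W → ℝ) (hp : ∀ x w, 0 ≤ p x w) (G : 𝒳 → W → ℕ) (hG : IsGuessing G) :
    ∑ w, (∑ x, p x w ^ (1/(1+ρ))) ^ (1+ρ) ≤
      (∑ k ∈ Finset.Icc 1 (Fintype.card 𝒳), (k : ℝ)⁻¹) ^ ρ *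
        ∑ w, ∑ x, p x w * (G x w : ℝ) ^ ρ := by
  have hρ1 : (0:ℝ) < 1 + ρ := by linarith
  set c : ℝ := ∑ k ∈ Finset.Icc 1 (Fintype.card 𝒳), (k : ℝ)⁻¹ with hc
  have hc0 : 0 ≤ c := Finset.sum_nonneg fun k _ => by positivity
  rw [Finset.mul_sum]
  apply Finset.sum_le_sum
  intro w _
  have h := holder_guess hρ (fun x => p x w) (fun x => hp x w) (fun x => G x w)
    (hG w).1 (hG w).2
  have hL : 0 ≤ ∑ x, p x w ^ (1/(1+ρ)) :=
    Finset.sum_nonneg fun x _ => Real.rpow_nonneg (hp x w) _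
  have hA : 0 ≤ ∑ x, p x w * (G x w : ℝ) ^ ρ :=
    Finset.sum_nonneg fun x _ => mul_nonneg (hp x w) (Real.rpow_nonneg (by positivity) _)
  have h2 := Real.rpow_le_rpow hL h (by linarith : (0:ℝ) ≤ 1+ρ)
  calc (∑ x, p x w ^ (1/(1+ρ))) ^ (1+ρ)
      ≤ ((∑ x, p x w * (G x w : ℝ) ^ ρ) ^ (1/(1+ρ)) * c ^ (ρ/(1+ρ))) ^ (1+ρ) := h2
    _ = c ^ ρ * ∑ x, p x w * (G x w : ℝ) ^ ρ := by
        rw [Real.mul_rpow (Real.rpow_nonneg hA _) (Real.rpow_nonneg hc0 _),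
          ← Real.rpow_mul hA, ← Real.rpow_mul hc0,
          one_div_mul_cancel hρ1.ne', div_mul_cancel₀ _ hρ1.ne', Real.rpow_one]
        ring

lemma hint_step {𝒳 M : Type*} [Fintype 𝒳] [Fintype M] [Nonempty M] {ρ : ℝ} (hρ : 0 < ρ)
    (p : 𝒳 → ℝ) (hp : ∀ x, 0 ≤ p x) (q : 𝒳 → M → ℝ)
    (hq0 : ∀ x m, 0 ≤ q x m) (hq1 : ∀ x, ∑ m, q x m = 1) :
    (∑ x, p x ^ (1/(1+ρ))) ^ (1+ρ) ≤
      (Fintype.card M : ℝ) ^ ρ * ∑ m, (∑ x, (p x * q x m) ^ (1/(1+ρ))) ^ (1+ρ) := by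
  have hρ1 : (0:ℝ) < 1+ρ := by linarith
  have hα0 : (0:ℝ) < 1/(1+ρ) := by positivity
  have hα1 : 1/(1+ρ) ≤ 1 := by rw [div_le_one hρ1]; linarith
  set cm : M → ℝ := fun m => ∑ x, (p x * q x m) ^ (1/(1+ρ)) with hcm
  have hcm0 : ∀ m, 0 ≤ cm m := fun m =>
    Finset.sum_nonneg fun x _ => Real.rpow_nonneg (mul_nonneg (hp x) (hq0 x m)) _
  have hK : (0:ℝ) < (Fintype.card M : ℝ) := by
    exact_mod_cast Fintype.card_pos
  have step1 : ∑ x, p x ^ (1/(1+ρ)) ≤ ∑ m, cm m := by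
    rw [hcm]
    simp only
    rw [Finset.sum_comm]
    apply Finset.sum_le_sum
    intro x _
    calc p x ^ (1/(1+ρ)) = p x ^ (1/(1+ρ)) * (∑ m, q x m) ^ (1/(1+ρ)) := by
          rw [hq1, Real.one_rpow, mul_one]
      _ ≤ p x ^ (1/(1+ρ)) * ∑ m, q x m ^ (1/(1+ρ)) :=
          mul_le_mul_of_nonneg_left
            (my_sum_rpow _ _ (fun m _ => hq0 x m) hα0 hα1)
            (Real.rpow_nonneg (hp x) _)
      _ = ∑ m, (p x * q x m) ^ (1/(1+ρ)) := by
          rw [Finset.mul_sum]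
          exact Finset.sum_congr rfl fun m _ => (Real.mul_rpow (hp x) (hq0 x m)).symm
  have hwconst : ∑ _m : M, ((Fintype.card M : ℝ))⁻¹ = 1 := by
    rw [Finset.sum_const, Finset.card_univ, nsmul_eq_mul]
    field_simp
  have step2 : (∑ m, cm m) ^ (1+ρ) ≤ (Fintype.card M : ℝ) ^ ρ * ∑ m, cm m ^ (1+ρ) := by
    have h := Real.rpow_arith_mean_le_arith_mean_rpow Finset.univ
      (fun _ => ((Fintype.card M : ℝ))⁻¹) cm (fun m _ => by positivity) hwconst
      (fun m _ => hcm0 m) (by linarith : (1:ℝ) ≤ 1+ρ)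
    rw [← Finset.mul_sum, ← Finset.mul_sum,
      Real.mul_rpow (by positivity) (Finset.sum_nonneg fun m _ => hcm0 m)] at h
    calc (∑ m, cm m) ^ (1+ρ)
        = (Fintype.card M : ℝ) ^ (1+ρ) *
            (((Fintype.card M : ℝ))⁻¹ ^ (1+ρ) * (∑ m, cm m) ^ (1+ρ)) := by
          rw [← mul_assoc, ← Real.mul_rpow hK.le (by positivity),
            mul_inv_cancel₀ hK.ne', Real.one_rpow, one_mul]
      _ ≤ (Fintype.card M : ℝ) ^ (1+ρ) * (((Fintype.card M : ℝ))⁻¹ * ∑ m, cm m ^ (1+ρ)) :=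
          mul_le_mul_of_nonneg_left h (Real.rpow_nonneg hK.le _)
      _ = (Fintype.card M : ℝ) ^ ρ * ∑ m, cm m ^ (1+ρ) := by
          rw [← mul_assoc]
          congr 1
          rw [Real.rpow_add hK, Real.rpow_one]
          field_simp
  calc (∑ x, p x ^ (1/(1+ρ))) ^ (1+ρ)
      ≤ (∑ m, cm m) ^ (1+ρ) :=
        Real.rpow_le_rpow (Finset.sum_nonneg fun x _ => Real.rpow_nonneg (hp x) _)
          step1 (by linarith)
    _ ≤ _ := step2

lemma bob_lower {𝒳 𝒴 M₁ M₂ : Type*} [Fintype 𝒳] [Fintype 𝒴] [Fintype M₁] [Fintype M₂]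
    [Nonempty 𝒳] [Nonempty M₁] [Nonempty M₂] {ρ : ℝ} (hρ : 0 < ρ)
    (P : 𝒳 → 𝒴 → ℝ) (hP0 : ∀ x y, 0 ≤ P x y)
    (Q : 𝒳 → 𝒴 → M₁ × M₂ → ℝ) (hQ : IsCondPMF Q) :
    (∑ y, (∑ x, P x y ^ (1/(1+ρ))) ^ (1+ρ)) /
      ((∑ k ∈ Finset.Icc 1 (Fintype.card 𝒳), (k : ℝ)⁻¹) ^ ρ *
        (Fintype.card (M₁ × M₂) : ℝ) ^ ρ)
      ≤ bobGuessAmb ρ P Q := by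
  have hρ1 : (0:ℝ) < 1 + ρ := by linarith
  set c : ℝ := ∑ k ∈ Finset.Icc 1 (Fintype.card 𝒳), (k : ℝ)⁻¹ with hcdef
  have hc1 : (1:ℝ) ≤ c := by
    have hmem : 1 ∈ Finset.Icc 1 (Fintype.card 𝒳) := by
      rw [Finset.mem_Icc]
      exact ⟨le_refl 1, Fintype.card_pos⟩
    have := Finset.single_le_sum (f := fun k : ℕ => (k : ℝ)⁻¹)
      (fun k _ => by positivity) hmem
    simpa using this
  have hcpos : (0:ℝ) < c := lt_of_lt_of_le one_pos hc1
  have hKpos : (0:ℝ) < (Fintype.card (M₁ × M₂) : ℝ) := by exact_mod_cast Fintype.card_pos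
  apply le_csInf
  · refine ⟨_, fun x _ => ((Fintype.equivFin 𝒳) x : ℕ) + 1, ?_, rfl⟩
    intro w
    constructor
    · intro a b hab
      simp only [add_left_inj] at hab
      exact (Fintype.equivFin 𝒳).injective (Fin.val_injective hab)
    · intro x
      rw [Finset.mem_Icc]
      exact ⟨Nat.le_add_left 1 _, Nat.succ_le_of_lt ((Fintype.equivFin 𝒳) x).isLt⟩
  · rintro e ⟨G, hG, rfl⟩
    rw [div_le_iff₀ (by positivity)]
    set p' : 𝒳 → (𝒴 × M₁ × M₂) → ℝ := fun x w => P x w.1 * Q x w.1 w.2 with hp'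
    have hp'0 : ∀ x w, 0 ≤ p' x w := fun x w =>
      mul_nonneg (hP0 x w.1) ((hQ x w.1).1 w.2)
    have h2 := arikan_bound hρ p' hp'0 G hG
    have h1 : ∀ y : 𝒴, (∑ x, P x y ^ (1/(1+ρ))) ^ (1+ρ) ≤
        (Fintype.card (M₁ × M₂) : ℝ) ^ ρ *
          ∑ m : M₁ × M₂, (∑ x, (P x y * Q x y m) ^ (1/(1+ρ))) ^ (1+ρ) := fun y =>
      hint_step hρ (fun x => P x y) (fun x => hP0 x y) (fun x m => Q x y m)
        (fun x m => (hQ x y).1 m) (fun x => (hQ x y).2)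
    have hsum_eq : ∑ w : 𝒴 × M₁ × M₂, (∑ x, p' x w ^ (1/(1+ρ))) ^ (1+ρ)
        = ∑ y, ∑ m : M₁ × M₂, (∑ x, (P x y * Q x y m) ^ (1/(1+ρ))) ^ (1+ρ) := by
      rw [Fintype.sum_prod_type]
    have hT : ∑ w : 𝒴 × M₁ × M₂, ∑ x, p' x w * (G x w : ℝ) ^ ρ
        = ∑ x, ∑ y, ∑ m : M₁ × M₂, P x y * Q x y m * (G x (y, m) : ℝ) ^ ρ := by
      rw [Fintype.sum_prod_type]
      have h3 : ∀ y : 𝒴, ∑ m : M₁ × M₂, ∑ x : 𝒳, p' x (y, m) * (G x (y, m) : ℝ) ^ ρ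
          = ∑ x : 𝒳, ∑ m : M₁ × M₂, p' x (y, m) * (G x (y, m) : ℝ) ^ ρ := fun y =>
        Finset.sum_comm
      rw [Finset.sum_congr rfl fun y _ => h3 y, Finset.sum_comm]
    calc ∑ y, (∑ x, P x y ^ (1/(1+ρ))) ^ (1+ρ)
        ≤ ∑ y, (Fintype.card (M₁ × M₂) : ℝ) ^ ρ *
            ∑ m : M₁ × M₂, (∑ x, (P x y * Q x y m) ^ (1/(1+ρ))) ^ (1+ρ) :=
          Finset.sum_le_sum fun y _ => h1 y
      _ = (Fintype.card (M₁ × M₂) : ℝ) ^ ρ *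
            ∑ w : 𝒴 × M₁ × M₂, (∑ x, p' x w ^ (1/(1+ρ))) ^ (1+ρ) := by
          rw [← Finset.mul_sum, hsum_eq]
      _ ≤ (Fintype.card (M₁ × M₂) : ℝ) ^ ρ *
            (c ^ ρ * ∑ w : 𝒴 × M₁ × M₂, ∑ x, p' x w * (G x w : ℝ) ^ ρ) :=
          mul_le_mul_of_nonneg_left h2 (Real.rpow_nonneg hKpos.le _)
      _ = (∑ x, ∑ y, ∑ m : M₁ × M₂, P x y * Q x y m * (G x (y, m) : ℝ) ^ ρ) *
            (c ^ ρ * (Fintype.card (M₁ × M₂) : ℝ) ^ ρ) := by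
          rw [hT]; ring

lemma S_pos {𝒳 𝒴 : Type*} [Fintype 𝒳] [Fintype 𝒴] {ρ : ℝ} (hρ : 0 < ρ)
    (P : 𝒳 → 𝒴 → ℝ) (hP : IsPMF P) :
    0 < ∑ y, (∑ x, P x y ^ (1/(1+ρ))) ^ (1+ρ) := by
  have hρ1 : (0:ℝ) < 1 + ρ := by linarith
  obtain ⟨x0, y0, hpos⟩ : ∃ x y, 0 < P x y := by
    by_contra h
    push_neg at h
    have hzero : ∑ x, ∑ y, P x y = 0 :=
      Finset.sum_eq_zero fun x _ => Finset.sum_eq_zero fun y _ =>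
        le_antisymm (h x y) (hP.1 x y)
    rw [hP.2] at hzero
    norm_num at hzero
  have hinner : 0 < ∑ x, P x y0 ^ (1/(1+ρ)) := by
    have hterm : 0 < P x0 y0 ^ (1/(1+ρ)) := Real.rpow_pos_of_pos hpos _
    have := Finset.single_le_sum (f := fun x => P x y0 ^ (1/(1+ρ)))
      (fun x _ => Real.rpow_nonneg (hP.1 x y0) _) (Finset.mem_univ x0)
    linarith
  have hterm : 0 < (∑ x, P x y0 ^ (1/(1+ρ))) ^ (1+ρ) := Real.rpow_pos_of_pos hinner _
  have := Finset.single_le_sum (f := fun y => (∑ x, P x y ^ (1/(1+ρ))) ^ (1+ρ))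
    (fun y _ => Real.rpow_nonneg
      (Finset.sum_nonneg fun x _ => Real.rpow_nonneg (hP.1 x y) _) _)
    (Finset.mem_univ y0)
  linarith

lemma harm_bound (N : ℕ) : ∑ k ∈ Finset.Icc 1 N, (k : ℝ)⁻¹ ≤ 1 + Real.log N := by
  have h1 : ∑ k ∈ Finset.Icc 1 N, (k : ℝ)⁻¹ = ((harmonic N : ℚ) : ℝ) := by
    rw [harmonic_eq_sum_Icc]
    push_cast
    rfl
  rw [h1]
  exact harmonic_le_one_add_log N

lemma ceil_logb_le {R : ℝ} (hR : 0 ≤ R) (n : ℕ) :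
    Real.logb 2 ((⌈(2:ℝ) ^ ((n:ℝ) * R)⌉₊ : ℕ) : ℝ) ≤ (n:ℝ) * R + 1 := by
  have hx : (1:ℝ) ≤ (2:ℝ) ^ ((n:ℝ) * R) := Real.one_le_rpow one_le_two (by positivity)
  have h1 : ((⌈(2:ℝ) ^ ((n:ℝ) * R)⌉₊ : ℕ) : ℝ) < (2:ℝ) ^ ((n:ℝ) * R) + 1 :=
    Nat.ceil_lt_add_one (by linarith)
  have h2 : (2:ℝ) ^ ((n:ℝ) * R) + 1 ≤ (2:ℝ) ^ ((n:ℝ) * R + 1) := by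
    rw [Real.rpow_add two_pos, Real.rpow_one]
    linarith
  have hpos : (0:ℝ) < ((⌈(2:ℝ) ^ ((n:ℝ) * R)⌉₊ : ℕ) : ℝ) := by
    have : 0 < ⌈(2:ℝ) ^ ((n:ℝ) * R)⌉₊ := Nat.ceil_pos.mpr (by positivity)
    exact_mod_cast this
  calc Real.logb 2 ((⌈(2:ℝ) ^ ((n:ℝ) * R)⌉₊ : ℕ) : ℝ)
      ≤ Real.logb 2 ((2:ℝ) ^ ((n:ℝ) * R + 1)) :=
        Real.logb_le_logb_of_le one_lt_two hpos (by linarith)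
    _ = (n:ℝ) * R + 1 := Real.logb_rpow (by norm_num) (by norm_num)

lemma tendsto_logb_affine {C : ℝ} (hC : 0 < C) :
    Filter.Tendsto (fun n : ℕ => Real.logb 2 (1 + (n:ℝ) * C) / (n:ℝ))
      Filter.atTop (nhds 0) := by
  have h1 : Filter.Tendsto (fun n : ℕ => (1:ℝ) + (n:ℝ) * C) Filter.atTop Filter.atTop :=
    Filter.tendsto_atTop_add_const_left _ 1
      (Filter.Tendsto.atTop_mul_const hC tendsto_natCast_atTop_atTop)
  have h2 : Filter.Tendsto (fun n : ℕ => Real.log (1 + (n:ℝ) * C) / (1 + (n:ℝ) * C))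
      Filter.atTop (nhds 0) :=
    (Real.isLittleO_log_id_atTop.tendsto_div_nhds_zero).comp h1
  have h3 : Filter.Tendsto (fun n : ℕ => (1 + (n:ℝ) * C) / (n:ℝ))
      Filter.atTop (nhds C) := by
    have hz : Filter.Tendsto (fun n : ℕ => 1 / (n:ℝ)) Filter.atTop (nhds 0) :=
      tendsto_one_div_atTop_nhds_zero_nat
    have h4 : Filter.Tendsto (fun n : ℕ => 1 / (n:ℝ) + C) Filter.atTop (nhds (0 + C)) :=
      hz.add_const C
    rw [zero_add] at h4
    apply h4.congr'
    filter_upwards [Filter.eventually_ge_atTop 1] with n hn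
    have hn0 : (n:ℝ) ≠ 0 := by positivity
    field_simp
  have h5 : Filter.Tendsto
      (fun n : ℕ => Real.log (1 + (n:ℝ) * C) / (1 + (n:ℝ) * C) * ((1 + (n:ℝ) * C) / (n:ℝ)))
      Filter.atTop (nhds 0) := by
    have := h2.mul h3
    rwa [zero_mul] at this
  have h6 : Filter.Tendsto (fun n : ℕ => Real.log (1 + (n:ℝ) * C) / (n:ℝ))
      Filter.atTop (nhds 0) := by
    apply h5.congr'
    filter_upwards [Filter.eventually_ge_atTop 1] with n hn
    have hd : (1:ℝ) + (n:ℝ) * C ≠ 0 := by positivity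
    field_simp
  have h7 := h6.div_const (Real.log 2)
  rw [zero_div] at h7
  apply h7.congr
  intro n
  rw [Real.logb, div_div, div_div]
  ring_nf

lemma bob_upper {𝒳 𝒴 M₁ M₂ : Type*} [Fintype 𝒳] [Fintype 𝒴] [Fintype M₁] [Fintype M₂]
    [Nonempty 𝒳] {ρ : ℝ} (hρ : 0 < ρ)
    (P : 𝒳 → 𝒴 → ℝ) (hP : IsPMF P) (Q : 𝒳 → 𝒴 → M₁ × M₂ → ℝ) (hQ : IsCondPMF Q) :
    bobGuessAmb ρ P Q ≤ (Fintype.card 𝒳 : ℝ) ^ ρ := by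
  set G0 : 𝒳 → 𝒴 × M₁ × M₂ → ℕ := fun x _ => ((Fintype.equivFin 𝒳) x : ℕ) + 1 with hG0
  have hguess : IsGuessing G0 := by
    intro w
    constructor
    · intro a b hab
      simp only [hG0, add_left_inj] at hab
      exact (Fintype.equivFin 𝒳).injective (Fin.val_injective hab)
    · intro x
      rw [Finset.mem_Icc]
      exact ⟨Nat.le_add_left 1 _, Nat.succ_le_of_lt ((Fintype.equivFin 𝒳) x).isLt⟩
  have hbdd : BddBelow { e | ∃ G : 𝒳 → 𝒴 × M₁ × M₂ → ℕ, IsGuessing G ∧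
      e = ∑ x, ∑ y, ∑ m : M₁ × M₂, P x y * Q x y m * (G x (y, m) : ℝ) ^ ρ } := by
    refine ⟨0, ?_⟩
    rintro e ⟨G, hG, rfl⟩
    apply Finset.sum_nonneg
    intro x _
    apply Finset.sum_nonneg
    intro y _
    apply Finset.sum_nonneg
    intro m _
    exact mul_nonneg (mul_nonneg (hP.1 x y) ((hQ x y).1 m)) (Real.rpow_nonneg (by positivity) _)
  have hmem : (∑ x, ∑ y, ∑ m : M₁ × M₂, P x y * Q x y m * (G0 x (y, m) : ℝ) ^ ρ) ∈
      { e | ∃ G : 𝒳 → 𝒴 × M₁ × M₂ → ℕ, IsGuessing G ∧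
        e = ∑ x, ∑ y, ∑ m : M₁ × M₂, P x y * Q x y m * (G x (y, m) : ℝ) ^ ρ } :=
    ⟨G0, hguess, rfl⟩
  refine le_trans (csInf_le hbdd hmem) ?_
  have hterm : ∀ x y (m : M₁ × M₂), P x y * Q x y m * (G0 x (y, m) : ℝ) ^ ρ
      ≤ P x y * Q x y m * (Fintype.card 𝒳 : ℝ) ^ ρ := by
    intro x y m
    apply mul_le_mul_of_nonneg_left _ (mul_nonneg (hP.1 x y) ((hQ x y).1 m))
    apply Real.rpow_le_rpow (by positivity) _ hρ.le
    exact_mod_cast Nat.succ_le_of_lt ((Fintype.equivFin 𝒳) x).isLt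
  calc ∑ x, ∑ y, ∑ m : M₁ × M₂, P x y * Q x y m * (G0 x (y, m) : ℝ) ^ ρ
      ≤ ∑ x, ∑ y, ∑ m : M₁ × M₂, P x y * Q x y m * (Fintype.card 𝒳 : ℝ) ^ ρ :=
        Finset.sum_le_sum fun x _ => Finset.sum_le_sum fun y _ =>
          Finset.sum_le_sum fun m _ => hterm x y m
    _ = (Fintype.card 𝒳 : ℝ) ^ ρ := by
        have h1 : ∀ x y, ∑ m : M₁ × M₂, P x y * Q x y m * (Fintype.card 𝒳 : ℝ) ^ ρ
            = P x y * (Fintype.card 𝒳 : ℝ) ^ ρ := by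
          intro x y
          rw [← Finset.sum_mul, ← Finset.mul_sum, (hQ x y).2, mul_one]
        simp only [h1, ← Finset.sum_mul]
        rw [hP.2, one_mul]


lemma harm_one_le {N : ℕ} (hN : 0 < N) : (1:ℝ) ≤ ∑ k ∈ Finset.Icc 1 N, (k : ℝ)⁻¹ := by
  have hmem : 1 ∈ Finset.Icc 1 N := by rw [Finset.mem_Icc]; exact ⟨le_refl 1, hN⟩
  have := Finset.single_le_sum (f := fun k : ℕ => (k : ℝ)⁻¹)
    (fun k _ => by positivity) hmem
  simpa using this

theorem asymptotic_infeasibility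
    {𝒳 𝒴 : Type*} [Fintype 𝒳] [Fintype 𝒴] [Nonempty 𝒳] [Nonempty 𝒴]
    (ρ : ℝ) (hρ : 0 < ρ)
    (P : ∀ n : ℕ, (Fin n → 𝒳) → (Fin n → 𝒴) → ℝ) (hP : ∀ n, IsPMF (P n))
    (H : ℝ)
    (hH : Filter.Tendsto (fun n => condRenyi (1 / (1 + ρ)) (P n) / n)
      Filter.atTop (nhds H))
    (R₁ R₂ : ℝ) (hR₁ : 0 < R₁) (hR₂ : 0 < R₂) (hsum : R₁ + R₂ < H)
    (Q : ∀ n : ℕ, (Fin n → 𝒳) → (Fin n → 𝒴) →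
      Fin ⌈(2 : ℝ) ^ ((n : ℝ) * R₁)⌉₊ × Fin ⌈(2 : ℝ) ^ ((n : ℝ) * R₂)⌉₊ → ℝ)
    (hQ : ∀ n, IsCondPMF (Q n)) :
    ¬ Filter.Tendsto (fun n => bobGuessAmb ρ (P n) (Q n)) Filter.atTop (nhds 1) ∧
    ρ * (H - R₁ - R₂) ≤
      Filter.liminf (fun n => Real.logb 2 (bobGuessAmb ρ (P n) (Q n)) / n)
        Filter.atTop ∧
    0 < ρ * (H - R₁ - R₂) := by
  have hρ1 : (0:ℝ) < 1 + ρ := by linarith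
  have hLpos : 0 < ρ * (H - R₁ - R₂) := mul_pos hρ (by linarith)
  set C' : ℝ := Real.log (Fintype.card 𝒳) + 1 with hC'def
  have hlogX : 0 ≤ Real.log (Fintype.card 𝒳) :=
    Real.log_nonneg (by exact_mod_cast Fintype.card_pos (α := 𝒳))
  have hC' : 0 < C' := by linarith
  set u : ℕ → ℝ := fun n => Real.logb 2 (bobGuessAmb ρ (P n) (Q n)) / n with hu_def
  set v : ℕ → ℝ := fun n => ρ * (condRenyi (1/(1+ρ)) (P n) / n)
    - ρ * (Real.logb 2 (1 + (n:ℝ) * C') / (n:ℝ)) - ρ * (R₁ + R₂) - 2 * ρ / (n:ℝ) with hv_def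
  -- the pointwise bound
  have key : ∀ n : ℕ, 1 ≤ n →
      v n ≤ u n ∧ u n ≤ ρ * Real.logb 2 (Fintype.card 𝒳) := by
    intro n hn
    haveI : Nonempty (Fin ⌈(2:ℝ) ^ ((n:ℝ) * R₁)⌉₊) :=
      ⟨⟨0, Nat.ceil_pos.mpr (by positivity)⟩⟩
    haveI : Nonempty (Fin ⌈(2:ℝ) ^ ((n:ℝ) * R₂)⌉₊) :=
      ⟨⟨0, Nat.ceil_pos.mpr (by positivity)⟩⟩
    have hnR : (0:ℝ) < n := by exact_mod_cast hn
    set Sn : ℝ := ∑ y, (∑ x, P n x y ^ (1/(1+ρ))) ^ (1+ρ) with hSn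
    set cn : ℝ := ∑ k ∈ Finset.Icc 1 (Fintype.card (Fin n → 𝒳)), (k : ℝ)⁻¹ with hcn
    set Kn : ℝ := (Fintype.card
      (Fin ⌈(2:ℝ) ^ ((n:ℝ) * R₁)⌉₊ × Fin ⌈(2:ℝ) ^ ((n:ℝ) * R₂)⌉₊) : ℝ) with hKn
    have hlow : Sn / (cn ^ ρ * Kn ^ ρ) ≤ bobGuessAmb ρ (P n) (Q n) :=
      bob_lower hρ (P n) (hP n).1 (Q n) (hQ n)
    have hSpos : 0 < Sn := S_pos hρ (P n) (hP n)
    have hcn1 : (1:ℝ) ≤ cn := harm_one_le Fintype.card_pos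
    have hcnpos : (0:ℝ) < cn := lt_of_lt_of_le one_pos hcn1
    have hKn1 : (1:ℝ) ≤ Kn := by
      rw [hKn]
      exact_mod_cast Nat.one_le_iff_ne_zero.mpr Fintype.card_ne_zero
    have hKnpos : (0:ℝ) < Kn := lt_of_lt_of_le one_pos hKn1
    have hBpos : 0 < Sn / (cn ^ ρ * Kn ^ ρ) := by positivity
    have hApos : 0 < bobGuessAmb ρ (P n) (Q n) := lt_of_lt_of_le hBpos hlow
    -- logb of the lower bound
    have hlogb_low : Real.logb 2 (Sn / (cn ^ ρ * Kn ^ ρ))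
        = Real.logb 2 Sn - ρ * Real.logb 2 cn - ρ * Real.logb 2 Kn := by
      rw [Real.logb_div hSpos.ne' (by positivity),
        Real.logb_mul (by positivity) (by positivity),
        Real.logb_rpow_eq_mul_logb_of_pos hcnpos,
        Real.logb_rpow_eq_mul_logb_of_pos hKnpos]
      ring
    have hlogS : Real.logb 2 Sn = ρ * condRenyi (1/(1+ρ)) (P n) := by
      have hexp : 1/(1/(1+ρ)) = 1+ρ := one_div_one_div _
      have hcoef : (1/(1+ρ))/(1 - 1/(1+ρ)) = 1/ρ := by
        rw [div_eq_div_iff]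
        · field_simp
          ring
        · have : 1 - 1/(1+ρ) = ρ/(1+ρ) := by field_simp; ring
          rw [this]; positivity
        · exact hρ.ne'
      simp only [condRenyi, hexp, hcoef, hSn]
      field_simp
    have hlogcn : Real.logb 2 cn ≤ Real.logb 2 (1 + (n:ℝ) * C') := by
      apply Real.logb_le_logb_of_le one_lt_two hcnpos
      calc cn ≤ 1 + Real.log (Fintype.card (Fin n → 𝒳)) :=
            harm_bound (Fintype.card (Fin n → 𝒳))
        _ = 1 + (n:ℝ) * Real.log (Fintype.card 𝒳) := by
            rw [Fintype.card_fun, Fintype.card_fin]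
            push_cast
            rw [Real.log_pow]
        _ ≤ 1 + (n:ℝ) * C' := by
            have : Real.log (Fintype.card 𝒳) ≤ C' := by rw [hC'def]; linarith
            nlinarith
    have hlogKn : Real.logb 2 Kn ≤ (n:ℝ) * R₁ + 1 + ((n:ℝ) * R₂ + 1) := by
      have hcard : Kn = ((⌈(2:ℝ) ^ ((n:ℝ) * R₁)⌉₊ : ℕ) : ℝ) *
          ((⌈(2:ℝ) ^ ((n:ℝ) * R₂)⌉₊ : ℕ) : ℝ) := by
        rw [hKn, Fintype.card_prod, Fintype.card_fin, Fintype.card_fin]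
        push_cast
        ring
      have hm1 : (0:ℝ) < ((⌈(2:ℝ) ^ ((n:ℝ) * R₁)⌉₊ : ℕ) : ℝ) := by
        exact_mod_cast Nat.ceil_pos.mpr (by positivity : (0:ℝ) < (2:ℝ) ^ ((n:ℝ) * R₁))
      have hm2 : (0:ℝ) < ((⌈(2:ℝ) ^ ((n:ℝ) * R₂)⌉₊ : ℕ) : ℝ) := by
        exact_mod_cast Nat.ceil_pos.mpr (by positivity : (0:ℝ) < (2:ℝ) ^ ((n:ℝ) * R₂))
      rw [hcard, Real.logb_mul hm1.ne' hm2.ne']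
      exact add_le_add (ceil_logb_le hR₁.le n) (ceil_logb_le hR₂.le n)
    have hlogbA : ρ * condRenyi (1/(1+ρ)) (P n)
        - ρ * Real.logb 2 (1 + (n:ℝ) * C') - ρ * ((n:ℝ) * (R₁ + R₂) + 2)
        ≤ Real.logb 2 (bobGuessAmb ρ (P n) (Q n)) := by
      have h1 := Real.logb_le_logb_of_le one_lt_two hBpos hlow
      rw [hlogb_low, hlogS] at h1
      have h2 : ρ * Real.logb 2 cn ≤ ρ * Real.logb 2 (1 + (n:ℝ) * C') :=
        mul_le_mul_of_nonneg_left hlogcn hρ.le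
      have h3 : ρ * Real.logb 2 Kn ≤ ρ * ((n:ℝ) * (R₁ + R₂) + 2) := by
        have := mul_le_mul_of_nonneg_left hlogKn hρ.le
        nlinarith
      linarith
    -- divide by n
    rw [hu_def, hv_def]
    simp only
    have h4 := mul_le_mul_of_nonneg_right hlogbA (le_of_lt (inv_pos.mpr hnR))
    rw [← div_eq_mul_inv, ← div_eq_mul_inv] at h4
    have h5 : ρ * (condRenyi (1/(1+ρ)) (P n) / n)
        - ρ * (Real.logb 2 (1 + (n:ℝ) * C') / (n:ℝ)) - ρ * (R₁ + R₂) - 2 * ρ / (n:ℝ)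
        = (ρ * condRenyi (1/(1+ρ)) (P n)
          - ρ * Real.logb 2 (1 + (n:ℝ) * C') - ρ * ((n:ℝ) * (R₁ + R₂) + 2)) / (n:ℝ) := by
      field_simp
      ring
    constructor
    · rw [h5]
      exact h4
    · -- upper bound
      have hup := bob_upper hρ (P n) (hP n) (Q n) (hQ n)
      have hcardX : ((Fintype.card (Fin n → 𝒳) : ℕ) : ℝ) = ((Fintype.card 𝒳 : ℕ) : ℝ) ^ n := by
        rw [Fintype.card_fun, Fintype.card_fin]
        push_cast
        ring
      have hXpos : (0:ℝ) < ((Fintype.card 𝒳 : ℕ) : ℝ) := by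
        exact_mod_cast Fintype.card_pos (α := 𝒳)
      have hlogup : Real.logb 2 (bobGuessAmb ρ (P n) (Q n))
          ≤ ρ * ((n:ℝ) * Real.logb 2 (Fintype.card 𝒳)) := by
        calc Real.logb 2 (bobGuessAmb ρ (P n) (Q n))
            ≤ Real.logb 2 (((Fintype.card (Fin n → 𝒳) : ℕ) : ℝ) ^ ρ) :=
              Real.logb_le_logb_of_le one_lt_two hApos hup
          _ = ρ * ((n:ℝ) * Real.logb 2 (Fintype.card 𝒳)) := by
              rw [Real.logb_rpow_eq_mul_logb_of_pos (by rw [hcardX]; positivity), hcardX,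
                Real.logb_pow]
      calc Real.logb 2 (bobGuessAmb ρ (P n) (Q n)) / (n:ℝ)
          ≤ ρ * ((n:ℝ) * Real.logb 2 (Fintype.card 𝒳)) / (n:ℝ) := by
            gcongr
          _ = ρ * Real.logb 2 (Fintype.card 𝒳) := by
            field_simp
  -- limits
  have ht2 := tendsto_logb_affine hC'
  have ht3 : Filter.Tendsto (fun n : ℕ => 2 * ρ / (n:ℝ)) Filter.atTop (nhds 0) := by
    have h := tendsto_one_div_atTop_nhds_zero_nat.const_mul (2*ρ)
    rw [mul_zero] at h
    apply h.congr
    intro n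
    rw [mul_one_div]
  have hv : Filter.Tendsto v Filter.atTop (nhds (ρ * (H - R₁ - R₂))) := by
    have t := (((hH.const_mul ρ).sub (ht2.const_mul ρ)).sub
      (tendsto_const_nhds (x := ρ * (R₁ + R₂)))).sub ht3
    have heq : ρ * H - ρ * 0 - ρ * (R₁ + R₂) - 0 = ρ * (H - R₁ - R₂) := by ring
    rw [heq] at t
    exact t
  have hev : ∀ᶠ n in Filter.atTop, v n ≤ u n := by
    filter_upwards [Filter.eventually_ge_atTop 1] with n hn
    exact (key n hn).1
  have hliminf : ρ * (H - R₁ - R₂) ≤ Filter.liminf u Filter.atTop := by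
    have hbd : Filter.IsBoundedUnder (· ≥ ·) Filter.atTop v := hv.isBoundedUnder_ge
    have hcou : Filter.IsCoboundedUnder (· ≥ ·) Filter.atTop u := by
      apply Filter.IsBoundedUnder.isCoboundedUnder_ge
      refine ⟨ρ * Real.logb 2 (Fintype.card 𝒳), ?_⟩
      rw [Filter.eventually_map]
      filter_upwards [Filter.eventually_ge_atTop 1] with n hn
      exact (key n hn).2
    calc ρ * (H - R₁ - R₂) = Filter.liminf v Filter.atTop := hv.liminf_eq.symm
      _ ≤ Filter.liminf u Filter.atTop := Filter.liminf_le_liminf hev hbd hcou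
  refine ⟨?_, hliminf, hLpos⟩
  intro htend
  have hlog0 : Filter.Tendsto (fun n => Real.log (bobGuessAmb ρ (P n) (Q n)))
      Filter.atTop (nhds 0) := by
    have hc := (Real.continuousAt_log one_ne_zero).tendsto.comp htend
    simpa [Function.comp_def] using hc
  have hu0 : Filter.Tendsto u Filter.atTop (nhds 0) := by
    have h1 := hlog0.div_const (Real.log 2)
    rw [zero_div] at h1
    have h2 := h1.mul tendsto_one_div_atTop_nhds_zero_nat
    rw [mul_zero] at h2
    apply h2.congr
    intro n
    rw [mul_one_div, hu_def]
    rfl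
  have hzero : Filter.liminf u Filter.atTop = 0 := hu0.liminf_eq
  rw [hzero] at hliminf
  linarith
end
end

section
/- For every stochastic task-encoder, i.e., every conditional PMF Q(m|x,y) on a finite nonempty set ℳ, there exists a guessing function G for X given Y such that E[G(X|Y)^ρ] ≤ |ℳ|^ρ · E[|L^Y_M|^ρ], where the expectations are with respect to the joint law P(x,y)Q(m|x,y) and L^y_m = {x ∈ 𝒳 : P(x,y)Q(m|x,y) > 0}. -/
open Real Finset Filter
open scoped Classical

noncomputable section

section Aux

variable {𝒳 𝒴 M : Type*} [Fintype 𝒳] [Fintype 𝒴] [Fintype M]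

/-- The list of `x` with positive posterior. -/
def encList (P : 𝒳 → 𝒴 → ℝ) (Q : 𝒳 → 𝒴 → M → ℝ) (y : 𝒴) (m : M) : Finset 𝒳 :=
  Finset.univ.filter fun x' => 0 < P x' y * Q x' y m

/-- Messages with positive probability given `(x, y)`. -/
def encT (P : 𝒳 → 𝒴 → ℝ) (Q : 𝒳 → 𝒴 → M → ℝ) (x : 𝒳) (y : 𝒴) : Finset M :=
  Finset.univ.filter fun m => 0 < P x y * Q x y m

/-- Minimal list size over positive-probability messages. -/
def encS (P : 𝒳 → 𝒴 → ℝ) (Q : 𝒳 → 𝒴 → M → ℝ) (x : 𝒳) (y : 𝒴) : ℕ :=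
  if h : (encT P Q x y).Nonempty then (encT P Q x y).inf' h fun m => (encList P Q y m).card
  else Fintype.card 𝒳 + 1

/-- Sorting key. -/
def encKey (P : 𝒳 → 𝒴 → ℝ) (Q : 𝒳 → 𝒴 → M → ℝ) (x : 𝒳) (y : 𝒴) : ℕ ×ₗ ℕ :=
  toLex (encS P Q x y, (Fintype.equivFin 𝒳 x : ℕ))

/-- The induced guessing function: rank by key. -/
def encG (P : 𝒳 → 𝒴 → ℝ) (Q : 𝒳 → 𝒴 → M → ℝ) (x : 𝒳) (y : 𝒴) : ℕ :=
  (Finset.univ.filter fun x' => encKey P Q x' y ≤ encKey P Q x y).card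

lemma encKey_inj (P : 𝒳 → 𝒴 → ℝ) (Q : 𝒳 → 𝒴 → M → ℝ) (y : 𝒴) :
    Function.Injective fun x : 𝒳 => encKey P Q x y := by
  intro x₁ x₂ h
  have h2 := congrArg (fun p : ℕ ×ₗ ℕ => (ofLex p).2) h
  simp only [encKey, ofLex_toLex] at h2
  exact (Fintype.equivFin 𝒳).injective (Fin.val_injective h2)

lemma encG_strictMono (P : 𝒳 → 𝒴 → ℝ) (Q : 𝒳 → 𝒴 → M → ℝ) (y : 𝒴) {x₁ x₂ : 𝒳}
    (h : encKey P Q x₁ y < encKey P Q x₂ y) : encG P Q x₁ y < encG P Q x₂ y := by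
  apply Finset.card_lt_card
  rw [Finset.ssubset_iff_of_subset]
  · exact ⟨x₂, by simp, by simp [not_le.mpr h]⟩
  · intro x' hx'
    simp only [Finset.mem_filter, Finset.mem_univ, true_and] at hx' ⊢
    exact hx'.trans h.le

lemma encG_guessing (P : 𝒳 → 𝒴 → ℝ) (Q : 𝒳 → 𝒴 → M → ℝ) : IsGuessing (encG P Q) := by
  intro y
  constructor
  · intro x₁ x₂ h
    by_contra hne
    have hk : encKey P Q x₁ y ≠ encKey P Q x₂ y := fun hc => hne (encKey_inj P Q y hc)
    rcases lt_or_gt_of_ne hk with hlt | hgt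
    · exact absurd h (encG_strictMono P Q y hlt).ne
    · exact absurd h.symm (encG_strictMono P Q y hgt).ne
  · intro x
    rw [Finset.mem_Icc]
    constructor
    · have : x ∈ Finset.univ.filter fun x' => encKey P Q x' y ≤ encKey P Q x y := by simp
      exact Finset.card_pos.mpr ⟨x, this⟩
    · exact (Finset.card_filter_le _ _).trans (le_of_eq (Finset.card_univ))

lemma encG_le (P : 𝒳 → 𝒴 → ℝ) (Q : 𝒳 → 𝒴 → M → ℝ) {x : 𝒳} {y : 𝒴} {m : M}
    (hpos : 0 < P x y * Q x y m) :
    encG P Q x y ≤ Fintype.card M * (encList P Q y m).card := by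
  have hmT : m ∈ encT P Q x y := by simp [encT, hpos]
  have hTne : (encT P Q x y).Nonempty := ⟨m, hmT⟩
  have hsx : encS P Q x y ≤ (encList P Q y m).card := by
    rw [encS, dif_pos hTne]
    exact Finset.inf'_le _ hmT
  have hLle : (encList P Q y m).card ≤ Fintype.card 𝒳 :=
    (Finset.card_filter_le _ _).trans (le_of_eq (Finset.card_univ))
  have hsub : (Finset.univ.filter fun x' => encKey P Q x' y ≤ encKey P Q x y) ⊆
      (Finset.univ.filter fun m' : M => (encList P Q y m').card ≤ (encList P Q y m).card).biUnion
        (fun m' => encList P Q y m') := by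
    intro x' hx'
    simp only [Finset.mem_filter, Finset.mem_univ, true_and] at hx'
    have hsx' : encS P Q x' y ≤ encS P Q x y := by
      simp only [encKey] at hx'
      rcases Prod.Lex.le_iff.mp hx' with h | ⟨h, _⟩
      · exact h.le
      · exact h.le
    have hsx'2 : encS P Q x' y ≤ (encList P Q y m).card := hsx'.trans hsx
    have hTne' : (encT P Q x' y).Nonempty := by
      by_contra hc
      rw [encS, dif_neg hc] at hsx'2
      omega
    obtain ⟨m', hm', hval⟩ := Finset.exists_mem_eq_inf' hTne' fun m'' => (encList P Q y m'').card
    have hsx'eq : encS P Q x' y = (encList P Q y m').card := by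
      rw [encS, dif_pos hTne']; exact hval
    rw [Finset.mem_biUnion]
    refine ⟨m', by simp [← hsx'eq, hsx'2], ?_⟩
    simp only [encT, Finset.mem_filter, Finset.mem_univ, true_and] at hm'
    simp [encList, hm']
  calc encG P Q x y ≤ _ := Finset.card_le_card hsub
    _ ≤ ∑ m' ∈ Finset.univ.filter fun m' : M =>
          (encList P Q y m').card ≤ (encList P Q y m).card, (encList P Q y m').card :=
        Finset.card_biUnion_le
    _ ≤ ∑ m' ∈ Finset.univ.filter fun m' : M =>
          (encList P Q y m').card ≤ (encList P Q y m).card, (encList P Q y m).card := by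
        apply Finset.sum_le_sum
        intro m' hm'
        simpa using (Finset.mem_filter.mp hm').2
    _ ≤ Fintype.card M * (encList P Q y m).card := by
        rw [Finset.sum_const, smul_eq_mul]
        exact Nat.mul_le_mul_right _ ((Finset.card_filter_le _ _).trans (le_of_eq Finset.card_univ))

end Aux
theorem taskEncoder_induces_guessing
    {𝒳 𝒴 M : Type*} [Fintype 𝒳] [Fintype 𝒴] [Fintype M]
    [Nonempty 𝒳] [Nonempty 𝒴] [Nonempty M]
    (ρ : ℝ) (hρ : 0 < ρ) (P : 𝒳 → 𝒴 → ℝ) (hP : IsPMF P)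
    (Q : 𝒳 → 𝒴 → M → ℝ) (hQ : IsCondPMF Q) :
    ∃ G : 𝒳 → 𝒴 → ℕ, IsGuessing G ∧
      ∑ x, ∑ y, P x y * (G x y : ℝ) ^ ρ ≤
        (Fintype.card M : ℝ) ^ ρ *
          ∑ x, ∑ y, ∑ m, P x y * Q x y m *
            ((Finset.univ.filter fun x' => 0 < P x' y * Q x' y m).card : ℝ) ^ ρ := by
  classical
  refine ⟨encG P Q, encG_guessing P Q, ?_⟩
  have hstep : ∀ x y, P x y * (encG P Q x y : ℝ) ^ ρ =
      ∑ m, P x y * Q x y m * (encG P Q x y : ℝ) ^ ρ := by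
    intro x y
    rw [show (∑ m, P x y * Q x y m * (encG P Q x y : ℝ) ^ ρ) =
        (∑ m, Q x y m) * (P x y * (encG P Q x y : ℝ) ^ ρ) by
      rw [Finset.sum_mul]; exact Finset.sum_congr rfl fun m _ => by ring]
    rw [(hQ x y).2, one_mul]
  simp only [hstep, Finset.mul_sum]
  refine Finset.sum_le_sum fun x _ => Finset.sum_le_sum fun y _ => Finset.sum_le_sum fun m _ => ?_
  have hPQ : 0 ≤ P x y * Q x y m := mul_nonneg (hP.1 x y) ((hQ x y).1 m)
  rcases hPQ.lt_or_eq with hpos | h0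
  · have hGle : (encG P Q x y : ℝ) ≤ (Fintype.card M : ℝ) * ((encList P Q y m).card : ℝ) := by
      have := encG_le P Q hpos
      exact_mod_cast this
    have hrpow : (encG P Q x y : ℝ) ^ ρ ≤
        ((Fintype.card M : ℝ) * ((encList P Q y m).card : ℝ)) ^ ρ :=
      Real.rpow_le_rpow (Nat.cast_nonneg _) hGle hρ.le
    rw [Real.mul_rpow (Nat.cast_nonneg _) (Nat.cast_nonneg _)] at hrpow
    have hLeq : ((Finset.univ.filter fun x' => 0 < P x' y * Q x' y m).card : ℝ) =
        ((encList P Q y m).card : ℝ) := rfl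
    rw [hLeq]
    calc P x y * Q x y m * (encG P Q x y : ℝ) ^ ρ
        ≤ P x y * Q x y m * ((Fintype.card M : ℝ) ^ ρ * ((encList P Q y m).card : ℝ) ^ ρ) :=
          mul_le_mul_of_nonneg_left hrpow hPQ
      _ = (Fintype.card M : ℝ) ^ ρ * (P x y * Q x y m * ((encList P Q y m).card : ℝ) ^ ρ) := by
          ring
  · rw [← h0]
    simp
end
end

section
/- Let G be a guessing function for X given Y, let v be a positive integer with v ≤ |𝒳|, and let ℳ be a finite set with |ℳ| ≥ v·(⌊log⌈|𝒳|/v⌉⌋ + 1). Then there exists a deterministic task-encoder, i.e., a function f : 𝒳×𝒴 → ℳ (equivalently a 0-1 valued conditional PMF Q(m|x,y)), whose lists satisfy E[|L^Y_M|^ρ] ≤ E[⌈G(X|Y)/v⌉^ρ]. -/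
open Real Finset Filter
open scoped Classical

noncomputable section

theorem guessing_induces_taskEncoder
    {𝒳 𝒴 M : Type*} [Fintype 𝒳] [Fintype 𝒴] [Fintype M]
    [Nonempty 𝒳] [Nonempty 𝒴] [Nonempty M]
    (ρ : ℝ) (hρ : 0 < ρ) (P : 𝒳 → 𝒴 → ℝ) (hP : IsPMF P)
    (G : 𝒳 → 𝒴 → ℕ) (hG : IsGuessing G)
    (v : ℕ) (hv : 0 < v) (hv' : v ≤ Fintype.card 𝒳)
    (hM : v * (Nat.log 2 ((Fintype.card 𝒳 + v - 1) / v) + 1) ≤ Fintype.card M) :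
    ∃ f : 𝒳 × 𝒴 → M,
      ∑ x, ∑ y, P x y *
          ((Finset.univ.filter fun x' => 0 < P x' y ∧ f (x', y) = f (x, y)).card : ℝ) ^ ρ ≤
        ∑ x, ∑ y, P x y * ((⌈(G x y : ℝ) / (v : ℝ)⌉ : ℝ)) ^ ρ := by
  classical
  obtain ⟨hP0, -⟩ := hP
  set N := Fintype.card 𝒳 with hN
  set L := Nat.log 2 ((N + v - 1) / v) + 1 with hLdef
  have hcard : Fintype.card (Fin v × Fin L) ≤ Fintype.card M := by
    simpa [Fintype.card_prod] using hM
  obtain ⟨ι⟩ := Function.Embedding.nonempty_of_card_le hcard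
  have hG1 : ∀ x y, 1 ≤ G x y := fun x y => (Finset.mem_Icc.mp ((hG y).2 x)).1
  have hGN : ∀ x y, G x y ≤ N := fun x y => (Finset.mem_Icc.mp ((hG y).2 x)).2
  have hfit : ∀ x y, Nat.log 2 ((G x y - 1) / v + 1) < L := by
    intro x y
    have h1 : G x y - 1 ≤ N - 1 := Nat.sub_le_sub_right (hGN x y) 1
    have h2 : (G x y - 1) / v + 1 ≤ (N - 1 + v) / v := by
      rw [Nat.add_div_right _ hv]
      exact Nat.add_le_add_right (Nat.div_le_div_right h1) 1
    have h3 : N - 1 + v = N + v - 1 := by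
      have hN1 : 1 ≤ N := Nat.one_le_iff_ne_zero.mpr Fintype.card_ne_zero
      omega
    rw [h3] at h2
    exact Nat.lt_succ_of_le (Nat.log_mono_right h2)
  set e : 𝒳 → 𝒴 → Fin v × Fin L := fun x y =>
    (⟨(G x y - 1) % v, Nat.mod_lt _ hv⟩, ⟨Nat.log 2 ((G x y - 1) / v + 1), hfit x y⟩) with he
  refine ⟨fun p => ι (e p.1 p.2), ?_⟩
  apply Finset.sum_le_sum
  intro x _
  apply Finset.sum_le_sum
  intro y _
  have hcnt : (Finset.univ.filter fun x' =>
      0 < P x' y ∧ ι (e x' y) = ι (e x y)).card ≤ (G x y - 1) / v + 1 := by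
    have hsub : (Finset.univ.filter fun x' => 0 < P x' y ∧ ι (e x' y) = ι (e x y))
        ⊆ Finset.univ.filter fun x' => e x' y = e x y := by
      intro x' hx'
      simp only [Finset.mem_filter, Finset.mem_univ, true_and] at hx' ⊢
      exact ι.injective hx'.2
    refine le_trans (Finset.card_le_card hsub) ?_
    have hmap : ∀ x' ∈ (Finset.univ.filter fun x' => e x' y = e x y),
        (G x' y - 1) / v + 1 ∈ Finset.Ico (2 ^ Nat.log 2 ((G x y - 1) / v + 1))
          (2 ^ (Nat.log 2 ((G x y - 1) / v + 1) + 1)) := by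
      intro x' hx'
      simp only [Finset.mem_filter, Finset.mem_univ, true_and, he, Prod.mk.injEq,
        Fin.mk.injEq] at hx'
      rw [Finset.mem_Ico, ← hx'.2]
      exact ⟨Nat.pow_log_le_self 2 (Nat.succ_ne_zero _),
        Nat.lt_pow_succ_log_self one_lt_two _⟩
    have hinj : ∀ x₁ ∈ (Finset.univ.filter fun x' => e x' y = e x y),
        ∀ x₂ ∈ (Finset.univ.filter fun x' => e x' y = e x y),
        (G x₁ y - 1) / v + 1 = (G x₂ y - 1) / v + 1 → x₁ = x₂ := by
      intro x₁ h₁ x₂ h₂ hq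
      simp only [Finset.mem_filter, Finset.mem_univ, true_and, he, Prod.mk.injEq,
        Fin.mk.injEq] at h₁ h₂
      have hq' : (G x₁ y - 1) / v = (G x₂ y - 1) / v := by omega
      have hm : (G x₁ y - 1) % v = (G x₂ y - 1) % v := h₁.1.trans h₂.1.symm
      have e1 := Nat.div_add_mod (G x₁ y - 1) v
      have e2 := Nat.div_add_mod (G x₂ y - 1) v
      rw [hq', hm] at e1
      have hg1 := hG1 x₁ y
      have hg2 := hG1 x₂ y
      exact (hG y).1 (show G x₁ y = G x₂ y by omega)
    calc (Finset.univ.filter fun x' => e x' y = e x y).card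
        ≤ (Finset.Ico (2 ^ Nat.log 2 ((G x y - 1) / v + 1))
            (2 ^ (Nat.log 2 ((G x y - 1) / v + 1) + 1))).card :=
          Finset.card_le_card_of_injOn _ hmap hinj
      _ = 2 ^ Nat.log 2 ((G x y - 1) / v + 1) := by
          rw [Nat.card_Ico, pow_succ]; omega
      _ ≤ (G x y - 1) / v + 1 := Nat.pow_log_le_self 2 (Nat.succ_ne_zero _)
  have hvR : (0 : ℝ) < (v : ℝ) := by exact_mod_cast hv
  have hqlt : (G x y - 1) / v * v < G x y := by
    have h1 := Nat.div_mul_le_self (G x y - 1) v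
    have h2 := hG1 x y
    omega
  have hceil : (((G x y - 1) / v + 1 : ℕ) : ℤ) ≤ ⌈(G x y : ℝ) / (v : ℝ)⌉ := by
    push_cast
    rw [Int.add_one_le_iff, Int.lt_ceil, lt_div_iff₀ hvR]
    exact_mod_cast hqlt
  have hbase : ((Finset.univ.filter fun x' =>
      0 < P x' y ∧ ι (e x' y) = ι (e x y)).card : ℝ) ≤ (⌈(G x y : ℝ) / (v : ℝ)⌉ : ℝ) :=
    calc ((Finset.univ.filter fun x' =>
        0 < P x' y ∧ ι (e x' y) = ι (e x y)).card : ℝ)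
        ≤ (((G x y - 1) / v + 1 : ℕ) : ℝ) := by exact_mod_cast hcnt
      _ = ((((G x y - 1) / v + 1 : ℕ) : ℤ) : ℝ) := (Int.cast_natCast _).symm
      _ ≤ (⌈(G x y : ℝ) / (v : ℝ)⌉ : ℝ) := by exact_mod_cast hceil
  refine mul_le_mul_of_nonneg_left ?_ (hP0 x y)
  exact Real.rpow_le_rpow (Nat.cast_nonneg _) hbase hρ.le
end
end
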